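/- arXiv:2412.12915 — 3 statements merged into one kernel-verified Lean document; each statement's English description precedes it below -/
import Mathlib

section
/- Let p be an odd prime and let G_E be a multi-EGS group satisfying the hypotheses: there exist m ∈ {1,…,p}, k ∈ {1,…,r_m} and j ∈ {1,…,p−1} such that e^{(m)}_{k,j} ≠ 0 and e^{(l)}_{i,p−j} = 0 for all i ∈ {1,…,r_l} and all l ∈ {1,…,p}. Then G_E is self-replicating: for every first-level vertex x ∈ X, the projection homomorphism π_x : St_{G_E}(x) → G_E, g ↦ g|_x, is surjective onto G_E. -/
/-- An automorphism of the rooted `p`-ary tree, encoded by its portrait: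
at every vertex (a finite word over `Fin p`) it records the permutation of the
`p` subtrees hanging at that vertex. -/
@[ext]
structure TreeAut (p : ℕ) where
  perm : List (Fin p) → Equiv.Perm (Fin p)

namespace TreeAut

variable {p : ℕ}

/-- The section of a tree automorphism at a first-level vertex `x`. -/
def sect (g : TreeAut p) (x : Fin p) : TreeAut p := ⟨fun v => g.perm (x :: v)⟩

/-- The section of a tree automorphism at an arbitrary vertex. -/
def sectV (g : TreeAut p) : List (Fin p) → TreeAut p
  | [] => g
  | x :: v => (g.sect x).sectV v

/-- The action of a tree automorphism on vertices (finite words over `Fin p`). -/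
def act (g : TreeAut p) : List (Fin p) → List (Fin p)
  | [] => []
  | x :: v => g.perm [] x :: (g.sect x).act v

/-- The inverse of the action of a tree automorphism on vertices. -/
def actInv (g : TreeAut p) : List (Fin p) → List (Fin p)
  | [] => []
  | x :: v => (g.perm []).symm x :: (g.sect ((g.perm []).symm x)).actInv v

instance : One (TreeAut p) := ⟨⟨fun _ => 1⟩⟩

/-- Composition convention as in the paper: `g * h` acts by `g` first, then `h`. -/
instance : Mul (TreeAut p) := ⟨fun g h => ⟨fun v => (g.perm v).trans (h.perm (g.act v))⟩⟩

instance : Inv (TreeAut p) := ⟨fun g => ⟨fun v => (g.perm (g.actInv v)).symm⟩⟩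

theorem perm_one (v : List (Fin p)) : (1 : TreeAut p).perm v = 1 := rfl

theorem perm_mul (g h : TreeAut p) (v : List (Fin p)) :
    (g * h).perm v = (g.perm v).trans (h.perm (g.act v)) := rfl

theorem perm_inv (g : TreeAut p) (v : List (Fin p)) :
    (g⁻¹).perm v = (g.perm (g.actInv v)).symm := rfl

theorem sect_one (x : Fin p) : (1 : TreeAut p).sect x = 1 := rfl

theorem sect_mul (g h : TreeAut p) (x : Fin p) :
    (g * h).sect x = g.sect x * h.sect (g.perm [] x) := rfl

theorem sect_inv (g : TreeAut p) (x : Fin p) :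
    (g⁻¹).sect x = (g.sect ((g.perm []).symm x))⁻¹ := rfl

theorem act_one : ∀ v : List (Fin p), (1 : TreeAut p).act v = v
  | [] => rfl
  | x :: v => by
    show (1 : Equiv.Perm (Fin p)) x :: ((1 : TreeAut p).sect x).act v = x :: v
    rw [sect_one, act_one v]
    rfl

theorem act_mul : ∀ (v : List (Fin p)) (g h : TreeAut p), (g * h).act v = h.act (g.act v)
  | [], _, _ => rfl
  | x :: v, g, h => by
    show (g * h).perm [] x :: ((g * h).sect x).act v = _
    rw [sect_mul, act_mul v]
    rfl

theorem act_inv : ∀ (v : List (Fin p)) (g : TreeAut p), (g⁻¹).act v = g.actInv v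
  | [], _ => rfl
  | x :: v, g => by
    show (g⁻¹).perm [] x :: ((g⁻¹).sect x).act v = _
    rw [sect_inv, act_inv v]
    rfl

instance : Group (TreeAut p) where
  mul_assoc g h k := by
    ext v y
    simp [perm_mul, act_mul, Equiv.trans_apply]
  one_mul g := by
    ext v y
    simp [perm_mul, perm_one, act_one]
  mul_one g := by
    ext v y
    simp [perm_mul, perm_one]
  inv_mul_cancel g := by
    ext v y
    simp [perm_mul, perm_inv, perm_one, act_inv]

end TreeAut

/-- The rooted automorphism `a = (1,…,1)ε`, where `ε = (0 1 … p-1)` is the cyclic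
rotation `x ↦ x + 1` of `Fin p`. -/
def rot (p : ℕ) [NeZero p] : TreeAut p :=
  ⟨fun v => if v = [] then Equiv.addRight (1 : Fin p) else 1⟩

/-- The components of a defining vector `v ∈ (ℤ/pℤ)^{p-1}`, read `p`-periodically:
for `1 ≤ n ≤ p-1`, `vcomp v n` is the `n`-th component of `v` (and `vcomp v n = 0`
when `n ≡ 0 mod p`). -/
def vcomp {p : ℕ} [NeZero p] (v : Fin (p - 1) → ZMod p) (n : ℕ) : ZMod p :=
  if h : n % p = 0 then 0
  else v ⟨n % p - 1, by
    have h2 : n % p < p := Nat.mod_lt _ (Nat.pos_of_ne_zero (NeZero.ne p))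
    omega⟩

/-- `N` is a quasinucleus with constant `k` for the self-similar group generated by the
symmetric set `S`: all sections at level `k` of products of two elements of `S ∪ N` lie in `N`. -/
def IsQuasiNucleusWith (p : ℕ) (S N : Set (TreeAut p)) (k : ℕ) : Prop :=
  ∀ n₁ ∈ S ∪ N, ∀ n₂ ∈ S ∪ N, ∀ v : List (Fin p), v.length = k → (n₁ * n₂).sectV v ∈ N

/-- `N` is the nucleus of the group `G` with symmetric generating set `S`:
`N` is the inclusion-minimal finite subset of `G` that is a quasinucleus for some
level constant `k ≥ 1`. -/
def IsNucleusOf (p : ℕ) (S : Set (TreeAut p)) (G : Subgroup (TreeAut p)) (N : Set (TreeAut p)) : Prop :=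
  (N ⊆ (G : Set (TreeAut p)) ∧ N.Finite ∧ ∃ k, 1 ≤ k ∧ IsQuasiNucleusWith p S N k) ∧
  ∀ N' : Set (TreeAut p), N' ⊆ (G : Set (TreeAut p)) → N'.Finite →
    (∃ k, 1 ≤ k ∧ IsQuasiNucleusWith p S N' k) → N ⊆ N'
/-- The defining wreath recursions of the generators of a multi-EGS group with datum
`E = (E^(1),…,E^(p))`: here Lean's `l : Fin p` stands for the paper's `l = l.val + 1`,
the vector `e l i : Fin (p-1) → ZMod p` is `e^(l)_i` (Lean's `n : Fin (p-1)` standing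
for the component index `n = n.val + 1 ∈ {1,…,p-1}`), each `E^(l)` consists of `r l`
linearly independent vectors, at least one `r l` is positive, and the generator
`b l i = b^(l)_i` fixes all first-level vertices, has section `b^(l)_i` at the vertex
`l - 1` and section `a^{e^(l)_{i,n}}` at the vertex `l - 1 + n (mod p)` for `1 ≤ n ≤ p-1`. -/
def IsMultiEGSDatum (p : ℕ) [NeZero p] {r : Fin p → ℕ}
    (e : ∀ l : Fin p, Fin (r l) → Fin (p - 1) → ZMod p)
    (b : ∀ l : Fin p, Fin (r l) → TreeAut p) : Prop :=
  (∃ l, 0 < r l) ∧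
  (∀ l, LinearIndependent (ZMod p) (e l)) ∧
  (∀ (l : Fin p) (i : Fin (r l)),
    (∀ x : Fin p, (b l i).act [x] = [x]) ∧
    (b l i).sect l = b l i ∧
    ∀ n : Fin (p - 1),
      (b l i).sect (l + Fin.ofNat p (n.val + 1 : ℕ)) = rot p ^ (e l i n).val)

/-- The generating set `{a} ∪ {b^(l)_i}` of a multi-EGS group. -/
def multiEGSGens (p : ℕ) [NeZero p] {r : Fin p → ℕ}
    (b : ∀ l : Fin p, Fin (r l) → TreeAut p) : Set (TreeAut p) :=
  insert (rot p) {g | ∃ l i, b l i = g}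

/-- The multi-EGS group `G_E = ⟨a, b^(l)_i⟩`. -/
def multiEGS (p : ℕ) [NeZero p] {r : Fin p → ℕ}
    (b : ∀ l : Fin p, Fin (r l) → TreeAut p) : Subgroup (TreeAut p) :=
  Subgroup.closure (multiEGSGens p b)

theorem rot_mem_multiEGS (p : ℕ) [NeZero p] {r : Fin p → ℕ}
    (b : ∀ l : Fin p, Fin (r l) → TreeAut p) : rot p ∈ multiEGS p b :=
  Subgroup.subset_closure (Set.mem_insert _ _)

theorem b_mem_multiEGS (p : ℕ) [NeZero p] {r : Fin p → ℕ}
    (b : ∀ l : Fin p, Fin (r l) → TreeAut p) (l : Fin p) (i : Fin (r l)) :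
    b l i ∈ multiEGS p b :=
  Subgroup.subset_closure (Set.mem_insert_of_mem _ ⟨l, i, rfl⟩)

/-- The subgroup `B_l = ⟨b^(l)_1, …, b^(l)_{r_l}⟩`. -/
def Bsub (p : ℕ) [NeZero p] {r : Fin p → ℕ}
    (b : ∀ l : Fin p, Fin (r l) → TreeAut p) (l : Fin p) : Subgroup (TreeAut p) :=
  Subgroup.closure {g | ∃ i, b l i = g}

/-- The set `N_E = ⟨a⟩ ∪ ⋃_{l=1}^p B_l`. -/
def nucleusSet (p : ℕ) [NeZero p] {r : Fin p → ℕ}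
    (b : ∀ l : Fin p, Fin (r l) → TreeAut p) : Set (TreeAut p) :=
  (Subgroup.zpowers (rot p) : Set (TreeAut p)) ∪
    ⋃ l : Fin p, (Bsub p b l : Set (TreeAut p))
open Fin.NatCast

section Aux

variable {p : ℕ}

theorem TreeAut.act_single (g : TreeAut p) (x : Fin p) :
    g.act [x] = [g.perm [] x] := rfl

theorem TreeAut.act_single_iff (g : TreeAut p) (x : Fin p) :
    g.act [x] = [x] ↔ g.perm [] x = x := by
  rw [TreeAut.act_single]
  simp

theorem rot_pow_closed (p : ℕ) [NeZero p] (n : ℕ) :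
    (rot p) ^ n = ⟨fun v => if v = [] then Equiv.addRight (n : Fin p) else 1⟩ := by
  induction n with
  | zero =>
    ext v y
    cases v <;> simp [TreeAut.perm_one]
  | succ n ih =>
    ext v y
    rw [pow_succ, ih, TreeAut.perm_mul]
    cases v with
    | nil =>
      have hact : (TreeAut.mk (p := p)
          (fun v => if v = [] then Equiv.addRight (n : Fin p) else 1)).act [] = [] := rfl
      rw [hact]
      simp [rot, Equiv.trans_apply, add_assoc]
    | cons x w =>
      have hact : (TreeAut.mk (p := p)
          (fun v => if v = [] then Equiv.addRight (n : Fin p) else 1)).act (x :: w)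
          = ((Equiv.addRight (n : Fin p)) x) :: _ := rfl
      rw [hact]
      simp [rot]

theorem rot_pow_self (p : ℕ) [NeZero p] : (rot p) ^ p = 1 := by
  rw [rot_pow_closed]
  ext v y
  cases v <;> simp [TreeAut.perm_one]

theorem rot_pow_mod (p : ℕ) [NeZero p] (n : ℕ) : (rot p) ^ n = (rot p) ^ (n % p) := by
  conv_lhs => rw [← Nat.div_add_mod n p]
  rw [pow_add, pow_mul, rot_pow_self, one_pow, one_mul]

theorem rot_pow_sect (p : ℕ) [NeZero p] (n : ℕ) (x : Fin p) :
    ((rot p) ^ n).sect x = 1 := by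
  rw [rot_pow_closed]
  ext v y
  simp [TreeAut.sect, TreeAut.perm_one]

theorem rot_sect (p : ℕ) [NeZero p] (x : Fin p) : (rot p).sect x = 1 := by
  simpa using rot_pow_sect p 1 x

theorem rot_perm_nil (p : ℕ) [NeZero p] :
    (rot p).perm [] = Equiv.addRight (1 : Fin p) := rfl

/-- Conjugation by the rooted automorphism `a`. -/
def conjRot (p : ℕ) [NeZero p] (g : TreeAut p) : TreeAut p := (rot p)⁻¹ * g * rot p

theorem rot_inv_perm_nil (p : ℕ) [NeZero p] :
    ((rot p)⁻¹).perm [] = (Equiv.addRight (1 : Fin p)).symm := by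
  rw [TreeAut.perm_inv]
  rfl

theorem rot_inv_sect (p : ℕ) [NeZero p] (x : Fin p) : ((rot p)⁻¹).sect x = 1 := by
  rw [TreeAut.sect_inv, rot_sect, inv_one]

theorem conjRot_perm_nil (p : ℕ) [NeZero p] (g : TreeAut p) (hg : g.perm [] = 1) :
    (conjRot p g).perm [] = 1 := by
  unfold conjRot
  rw [TreeAut.perm_mul]
  have h1 : ((rot p)⁻¹ * g).act [] = [] := rfl
  rw [h1, TreeAut.perm_mul]
  have h2 : ((rot p)⁻¹).act [] = [] := rfl
  rw [h2, hg, rot_inv_perm_nil, rot_perm_nil]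
  ext y
  simp

theorem conjRot_sect (p : ℕ) [NeZero p] (g : TreeAut p) (x : Fin p) :
    (conjRot p g).sect x = g.sect (x - 1) := by
  unfold conjRot
  rw [TreeAut.sect_mul, TreeAut.sect_mul, rot_inv_sect, one_mul, rot_sect, mul_one,
    rot_inv_perm_nil]
  congr 1
  simp [Equiv.symm_apply_eq, sub_eq_add_neg]

theorem conjRot_iter_perm_nil (p : ℕ) [NeZero p] (g : TreeAut p) (hg : g.perm [] = 1) :
    ∀ n : ℕ, ((conjRot p)^[n] g).perm [] = 1 := by
  intro n
  induction n with
  | zero => exact hg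
  | succ n ih =>
    rw [Function.iterate_succ_apply']
    exact conjRot_perm_nil p _ ih

theorem conjRot_iter_sect (p : ℕ) [NeZero p] (g : TreeAut p) (x : Fin p) :
    ∀ n : ℕ, ((conjRot p)^[n] g).sect x = g.sect (x - (n : Fin p)) := by
  have key : ∀ (n : ℕ) (y : Fin p), ((conjRot p)^[n] g).sect y = g.sect (y - (n : Fin p)) := by
    intro n
    induction n with
    | zero => intro y; simp
    | succ n ih =>
      intro y
      rw [Function.iterate_succ_apply', conjRot_sect, ih]
      congr 1
      push_cast
      abel
  intro n
  exact key n x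

theorem conjRot_iter_mem (p : ℕ) [NeZero p] {r : Fin p → ℕ}
    (b : ∀ l : Fin p, Fin (r l) → TreeAut p) (g : TreeAut p) (hg : g ∈ multiEGS p b)
    (n : ℕ) : (conjRot p)^[n] g ∈ multiEGS p b := by
  induction n with
  | zero => exact hg
  | succ n ih =>
    rw [Function.iterate_succ_apply']
    exact mul_mem (mul_mem (inv_mem (rot_mem_multiEGS p b)) ih) (rot_mem_multiEGS p b)

theorem pow_perm_nil_and_sect (g : TreeAut p) (hg : g.perm [] = 1) (s : ℕ) :
    (g ^ s).perm [] = 1 ∧ ∀ x : Fin p, (g ^ s).sect x = (g.sect x) ^ s := by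
  induction s with
  | zero => exact ⟨rfl, fun _ => rfl⟩
  | succ s ih =>
    constructor
    · rw [pow_succ, TreeAut.perm_mul]
      have h1 : (g ^ s).act [] = [] := rfl
      rw [h1, ih.1, hg]
      rfl
    · intro x
      rw [pow_succ, TreeAut.sect_mul, ih.2, ih.1, pow_succ]
      rfl

end Aux

/-- **Self-replication of multi-EGS groups.** Under the hypotheses of Theorem A
(there are `m`, `k ∈ {1,…,r_m}` and `j ∈ {1,…,p-1}` with `e^(m)_{k,j} ≠ 0` and
`e^(l)_{i,p-j} = 0` for all `i, l`), the multi-EGS group `G_E` is self-replicating: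
for every first-level vertex `x`, the projection `π_x : St_{G_E}(x) → G_E`,
`g ↦ g|_x`, is surjective onto `G_E`. -/
theorem multiEGS_selfReplicating (p : ℕ) [Fact p.Prime] [NeZero p] (hp : Odd p)
    (r : Fin p → ℕ)
    (e : ∀ l : Fin p, Fin (r l) → Fin (p - 1) → ZMod p)
    (b : ∀ l : Fin p, Fin (r l) → TreeAut p)
    (hdatum : IsMultiEGSDatum p e b)
    (m : Fin p) (k : Fin (r m)) (j : Fin (p - 1))
    (hkj : e m k j ≠ 0)
    (hcol : ∀ (l : Fin p) (i : Fin (r l)), vcomp (e l i) (p - (j.val + 1)) = 0) :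
    ∀ x : Fin p, ∀ g ∈ multiEGS p b, ∃ h ∈ multiEGS p b,
      h.act [x] = [x] ∧ h.sect x = g := by
  obtain ⟨-, -, hb⟩ := hdatum
  have hbperm : ∀ (l : Fin p) (i : Fin (r l)), (b l i).perm [] = 1 := by
    intro l i
    apply Equiv.ext
    intro y
    simpa using (TreeAut.act_single_iff (b l i) y).mp ((hb l i).1 y)
  intro x g hg
  induction hg using Subgroup.closure_induction with
  | one =>
    exact ⟨1, one_mem _, TreeAut.act_one [x], TreeAut.sect_one x⟩
  | mul g₁ g₂ hg₁ hg₂ ih₁ ih₂ =>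
    obtain ⟨h₁, hm₁, hf₁, hs₁⟩ := ih₁
    obtain ⟨h₂, hm₂, hf₂, hs₂⟩ := ih₂
    refine ⟨h₁ * h₂, mul_mem hm₁ hm₂, ?_, ?_⟩
    · rw [TreeAut.act_mul, hf₁, hf₂]
    · rw [TreeAut.sect_mul, hs₁, (TreeAut.act_single_iff h₁ x).mp hf₁, hs₂]
  | inv g₁ hg₁ ih =>
    obtain ⟨h, hm, hf, hs⟩ := ih
    have hfx : h.perm [] x = x := (TreeAut.act_single_iff h x).mp hf
    have hsymm : (h.perm []).symm x = x := by
      rw [Equiv.symm_apply_eq, hfx]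
    refine ⟨h⁻¹, inv_mem hm, ?_, ?_⟩
    · rw [TreeAut.act_single_iff, TreeAut.perm_inv]
      have hinv : h.actInv [] = [] := rfl
      rw [hinv, hsymm]
    · rw [TreeAut.sect_inv, hsymm, hs]
  | mem g hgS =>
    rcases hgS with hga | ⟨l, i, rfl⟩
    · -- g = rot p
      subst hga
      set c : ZMod p := e m k j with hc
      set y : Fin p := m + ((j.val + 1 : ℕ) : Fin p) with hy
      have hsecty : (b m k).sect y = rot p ^ c.val := (hb m k).2.2 j
      set h₀ : TreeAut p := (conjRot p)^[(x - y).val] (b m k) with hh0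
      have h₀perm : h₀.perm [] = 1 := conjRot_iter_perm_nil p _ (hbperm m k) _
      have h₀sect : h₀.sect x = rot p ^ c.val := by
        rw [hh0, conjRot_iter_sect, Fin.cast_val_eq_self, sub_sub_cancel, hsecty]
      refine ⟨h₀ ^ (c⁻¹).val,
        pow_mem (conjRot_iter_mem p b _ (b_mem_multiEGS p b m k) _) _, ?_, ?_⟩
      · rw [TreeAut.act_single_iff, (pow_perm_nil_and_sect h₀ h₀perm _).1]
        rfl
      · rw [(pow_perm_nil_and_sect h₀ h₀perm _).2, h₀sect, ← pow_mul, rot_pow_mod,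
          ← ZMod.val_mul, mul_inv_cancel₀ hkj]
        have h1p : (1 : ZMod p).val = 1 := ZMod.val_one p
        rw [h1p, pow_one]
    · -- g = b l i
      refine ⟨(conjRot p)^[(x - l).val] (b l i),
        conjRot_iter_mem p b _ (b_mem_multiEGS p b l i) _, ?_, ?_⟩
      · rw [TreeAut.act_single_iff, conjRot_iter_perm_nil p _ (hbperm l i)]
        rfl
      · rw [conjRot_iter_sect, Fin.cast_val_eq_self, sub_sub_cancel]
        exact (hb l i).2.1
end

section
/- Let p ≥ 3 be a prime, 1 ≤ r < p, and let G_{E^{(p)}} be the multi-edge spinal group defined by an r-tuple E^{(p)} = (e_1,…,e_r) of linearly independent vectors e_i = (e_{i,1},…,e_{i,p−1}) in (Z/pZ)^{p−1}. Suppose there exist k ∈ {1,…,r} and j ∈ {1,…,p−1} such that e_{k,j} ≠ 0 and e_{i,p−j} = 0 for all 1 ≤ i ≤ r. Then G_{E^{(p)}} is liftable: the assignment σ(a) = (b_k^{a^{1−j}})^{(e_{k,j})^{−1}} and σ(b_i) = b_i^a for i ∈ {1,…,r} extends to a group homomorphism σ : G_{E^{(p)}} → St_{G_{E^{(p)}}}(0)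 such that π_0 ∘ σ is the identity on G_{E^{(p)}}. -/
open Fin.NatCast in
/-- The defining wreath recursions of the generators of a multi-edge spinal group
defined by an `r`-tuple `E^(p)` of linearly independent vectors of `(ℤ/pℤ)^{p-1}`:
each `b i` fixes all first-level vertices, has section `a^{e_{i,n}}` at the vertex
`n - 1` for `1 ≤ n ≤ p - 1` (Lean's `n : Fin (p-1)` is the paper's `n = n.val + 1`)
and section `b i` at the vertex `p - 1`. -/
def IsSpinalDatum (p : ℕ) [NeZero p] {r : ℕ}
    (e : Fin r → Fin (p - 1) → ZMod p) (b : Fin r → TreeAut p) : Prop :=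
  LinearIndependent (ZMod p) e ∧
  ∀ i : Fin r,
    (∀ x : Fin p, (b i).act [x] = [x]) ∧
    (b i).sect (((p - 1 : ℕ) : Fin p)) = b i ∧
    ∀ n : Fin (p - 1), (b i).sect ((n.val : ℕ) : Fin p) = rot p ^ (e i n).val

/-- The multi-edge spinal group `G_{E^(p)} = ⟨a, b_1, …, b_r⟩`. -/
def spinalGroup (p : ℕ) [NeZero p] {r : ℕ} (b : Fin r → TreeAut p) :
    Subgroup (TreeAut p) :=
  Subgroup.closure (insert (rot p) (Set.range b))

theorem rot_mem_spinal (p : ℕ) [NeZero p] {r : ℕ} (b : Fin r → TreeAut p) :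
    rot p ∈ spinalGroup p b :=
  Subgroup.subset_closure (Set.mem_insert _ _)

theorem b_mem_spinal (p : ℕ) [NeZero p] {r : ℕ} (b : Fin r → TreeAut p) (i : Fin r) :
    b i ∈ spinalGroup p b :=
  Subgroup.subset_closure (Set.mem_insert_of_mem _ ⟨i, rfl⟩)
namespace SpinalProof
open TreeAut
open Fin.CommRing

set_option linter.unusedSectionVars false

variable {p : ℕ} [NeZero p]

lemma act_nil (g : TreeAut p) : g.act [] = [] := rfl
lemma act_single (g : TreeAut p) (x : Fin p) : g.act [x] = [g.perm [] x] := rfl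
lemma sect_perm (g : TreeAut p) (x : Fin p) (v : List (Fin p)) :
    (g.sect x).perm v = g.perm (x :: v) := rfl

lemma perm_nil_mul (g h : TreeAut p) : (g * h).perm [] = (g.perm []).trans (h.perm []) := rfl
lemma perm_nil_inv (g : TreeAut p) : (g⁻¹).perm [] = (g.perm []).symm := rfl

lemma eq_one_ofPerm (g : TreeAut p) (h0 : g.perm [] = 1) (hs : ∀ x, g.sect x = 1) : g = 1 := by
  ext v y
  cases v with
  | nil => rw [h0]; rfl
  | cons x w =>
      have h2 : g.perm (x :: w) = 1 := by
        have h3 : g.perm (x :: w) = (g.sect x).perm w := rfl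
        rw [h3, hs x, TreeAut.perm_one]
      rw [h2, TreeAut.perm_one]

lemma rf_mul {g h : TreeAut p} (hg : g.perm [] = 1) (hh : h.perm [] = 1) :
    (g * h).perm [] = 1 := by rw [perm_nil_mul, hg, hh]; rfl

lemma rf_inv {g : TreeAut p} (hg : g.perm [] = 1) : (g⁻¹).perm [] = 1 := by
  rw [perm_nil_inv, hg]; rfl

lemma rf_pow {g : TreeAut p} (hg : g.perm [] = 1) (n : ℕ) : (g ^ n).perm [] = 1 := by
  induction n with
  | zero => rfl
  | succ n ih => rw [pow_succ]; exact rf_mul ih hg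

lemma rf_zpow {g : TreeAut p} (hg : g.perm [] = 1) (s : ℤ) : (g ^ s).perm [] = 1 := by
  cases s with
  | ofNat n => rw [Int.ofNat_eq_coe, zpow_natCast]; exact rf_pow hg n
  | negSucc n => rw [zpow_negSucc]; exact rf_inv (rf_pow hg (n+1))

lemma sect_mul_rf {g : TreeAut p} (hg : g.perm [] = 1) (h : TreeAut p) (x : Fin p) :
    (g * h).sect x = g.sect x * h.sect x := by rw [sect_mul, hg]; rfl

lemma sect_inv_rf {g : TreeAut p} (hg : g.perm [] = 1) (x : Fin p) :
    (g⁻¹).sect x = (g.sect x)⁻¹ := by rw [sect_inv, hg]; rfl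

lemma sect_pow_rf {g : TreeAut p} (hg : g.perm [] = 1) (x : Fin p) (n : ℕ) :
    (g ^ n).sect x = (g.sect x) ^ n := by
  induction n with
  | zero => rfl
  | succ n ih => rw [pow_succ, sect_mul_rf (rf_pow hg n), ih, pow_succ]

lemma sect_zpow_rf {g : TreeAut p} (hg : g.perm [] = 1) (x : Fin p) (s : ℤ) :
    (g ^ s).sect x = (g.sect x) ^ s := by
  cases s with
  | ofNat n => rw [Int.ofNat_eq_coe, zpow_natCast, zpow_natCast]; exact sect_pow_rf hg x n
  | negSucc n =>
      rw [zpow_negSucc, zpow_negSucc, sect_inv_rf (rf_pow hg (n+1)), sect_pow_rf hg x (n+1)]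

end SpinalProof
namespace SpinalProof
open TreeAut
open Fin.CommRing
set_option linter.unusedSectionVars false

variable {p : ℕ} [NeZero p]

lemma rot_perm_nil : (rot p).perm [] = Equiv.addRight (1 : Fin p) := by
  simp [rot]

lemma rot_sect (x : Fin p) : (rot p).sect x = 1 := by
  ext v y
  have h : ((rot p).sect x).perm v y = y := by simp [rot, TreeAut.sect]
  rw [h]
  simp [TreeAut.perm_one]

lemma rot_zpow_sect (s : ℤ) (x : Fin p) : ((rot p) ^ s).sect x = 1 := by
  induction s using Int.induction_on with
  | zero => rw [zpow_zero]; rfl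
  | succ n ih =>
      rw [zpow_add, zpow_one, sect_mul, ih, rot_sect, one_mul]
  | pred n ih =>
      rw [zpow_sub, zpow_one, sect_mul, ih, sect_inv, rot_sect, inv_one, one_mul]

lemma rot_zpow_perm (s : ℤ) : ((rot p) ^ s).perm [] = Equiv.addRight ((s : Fin p)) := by
  induction s using Int.induction_on with
  | zero => rw [zpow_zero]; ext y; simp [TreeAut.perm_one]
  | succ n ih =>
      rw [zpow_add, zpow_one, perm_nil_mul, ih, rot_perm_nil]
      ext y; push_cast; simp [add_assoc]
  | pred n ih =>
      rw [zpow_sub, zpow_one, perm_nil_mul, ih, perm_nil_inv, rot_perm_nil]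
      ext y
      push_cast
      simp [Equiv.addRight, sub_eq_add_neg, add_assoc]

lemma rot_zpow_perm_apply (s : ℤ) (x : Fin p) : ((rot p) ^ s).perm [] x = x + (s : Fin p) := by
  rw [rot_zpow_perm]; rfl

lemma rot_zpow_eq_one {s : ℤ} (hs : ((s : ℤ) : Fin p) = 0) : (rot p) ^ s = 1 := by
  apply eq_one_ofPerm
  · rw [rot_zpow_perm, hs]; ext y; simp
  · exact rot_zpow_sect s

lemma rot_zpow_eq_one_iff (s : ℤ) : (rot p) ^ s = 1 ↔ ((s : ℤ) : Fin p) = 0 := by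
  constructor
  · intro h
    have := rot_zpow_perm_apply (p := p) s 0
    rw [h] at this
    simpa [TreeAut.perm_one] using this.symm
  · exact rot_zpow_eq_one

lemma rot_pow_congr {c d : ℤ} (h : ((c : ℤ) : Fin p) = ((d : ℤ) : Fin p)) :
    (rot p) ^ c = (rot p) ^ d := by
  have : (rot p) ^ (c - d) = 1 := rot_zpow_eq_one (by push_cast; rw [h]; ring)
  have h2 := congrArg (· * (rot p) ^ d) this
  simpa [zpow_sub, mul_assoc] using h2

end SpinalProof
namespace SpinalProof
open TreeAut
open Fin.CommRing
set_option linter.unusedSectionVars false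

variable {p : ℕ} [NeZero p] {r : ℕ} {e : Fin r → Fin (p - 1) → ZMod p} {b : Fin r → TreeAut p}

lemma eq_one_of_forall_perm {g : TreeAut p} (h : ∀ v, g.perm v = 1) : g = 1 := by
  ext v y; rw [h v]; simp [TreeAut.perm_one]

lemma rot_pow_p : (rot p) ^ (p : ℕ) = 1 := by
  have : (rot p) ^ ((p : ℕ) : ℤ) = 1 := rot_zpow_eq_one (by push_cast; simp)
  rwa [zpow_natCast] at this

lemma zpow_eq_one_aux {g : TreeAut p} (hg : g ^ p = 1) {s : ℤ} (hs : ((s : ℤ) : Fin p) = 0) :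
    g ^ s = 1 := by
  have hdvd : (p : ℤ) ∣ s := (CharP.intCast_eq_zero_iff (Fin p) p s).1 hs
  obtain ⟨t, rfl⟩ := hdvd
  rw [zpow_mul, zpow_natCast, hg, one_zpow]

lemma rot_pow_nat_eq_one {N : ℕ} (hN : ((N : ℕ) : Fin p) = 0) : (rot p) ^ N = 1 := by
  have : (rot p) ^ ((N : ℕ) : ℤ) = 1 := rot_zpow_eq_one (by push_cast at hN ⊢; exact hN)
  rwa [zpow_natCast] at this

section Datum
variable (hd : IsSpinalDatum p e b)
include hd

lemma b_perm_nil (i : Fin r) : (b i).perm [] = 1 :=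
  Equiv.ext fun x => by
    have h := (hd.2 i).1 x
    rw [act_single] at h
    simpa using h

lemma b_sect_spine (i : Fin r) (x : Fin p) (hx : x.val = p - 1) : (b i).sect x = b i := by
  have h := (hd.2 i).2.1
  have hx2 : x = ((p - 1 : ℕ) : Fin p) := by
    apply Fin.ext
    rw [hx, Fin.val_natCast, Nat.mod_eq_of_lt (by have := x.isLt; omega)]
  rw [hx2]; exact h

lemma b_sect (i : Fin r) (x : Fin p) (hx : x.val ≠ p - 1) :
    (b i).sect x = rot p ^ ((e i ⟨x.val, by have := x.isLt; omega⟩).val) := by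
  have hlt : x.val < p - 1 := by have := x.isLt; omega
  have h := (hd.2 i).2.2 ⟨x.val, hlt⟩
  have hx2 : (((⟨x.val, hlt⟩ : Fin (p - 1)).val : ℕ) : Fin p) = x := by
    apply Fin.ext
    simp [Fin.val_natCast, Nat.mod_eq_of_lt x.isLt]
  rw [hx2] at h
  exact h

lemma b_pow_p (i : Fin r) : (b i) ^ p = 1 := by
  apply eq_one_of_forall_perm
  intro v
  induction v with
  | nil => exact rf_pow (b_perm_nil hd i) p
  | cons x w ih =>
      have h1 : ((b i) ^ p).perm (x :: w) = (((b i) ^ p).sect x).perm w := rfl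
      rw [h1, sect_pow_rf (b_perm_nil hd i)]
      by_cases hx : x.val = p - 1
      · rw [b_sect_spine hd i x hx]; exact ih
      · rw [b_sect hd i x hx, ← pow_mul]
        rw [rot_pow_nat_eq_one (by push_cast; simp), TreeAut.perm_one]

lemma b_zpow_eq_one (i : Fin r) {s : ℤ} (hs : ((s : ℤ) : Fin p) = 0) : (b i) ^ s = 1 :=
  zpow_eq_one_aux (b_pow_p hd i) hs

end Datum
end SpinalProof
namespace SpinalProof
open TreeAut
open Fin.CommRing
set_option linter.unusedSectionVars false

variable {p : ℕ} [NeZero p] {r : ℕ}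

/-- letters: `inl s` = `a^s`, `inr (i,ε)` = `b i ^ ε`. -/
abbrev Letter (r : ℕ) := ℤ ⊕ (Fin r × ℤ)

def evalW (a0 : TreeAut p) (b0 : Fin r → TreeAut p) : List (Letter r) → TreeAut p
  | [] => 1
  | .inl s :: w => a0 ^ s * evalW a0 b0 w
  | .inr z :: w => b0 z.1 ^ z.2 * evalW a0 b0 w

def invW : List (Letter r) → List (Letter r)
  | [] => []
  | .inl s :: w => invW w ++ [.inl (-s)]
  | .inr z :: w => invW w ++ [.inr (z.1, -z.2)]

def asum : List (Letter r) → ℤ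
  | [] => 0
  | .inl s :: w => s + asum w
  | .inr _ :: w => asum w

def bsum (e : Fin r → Fin (p - 1) → ZMod p) : List (Letter r) → (Fin (p - 1) → ZMod p)
  | [] => 0
  | .inl _ :: w => bsum e w
  | .inr z :: w => (z.2 : ZMod p) • e z.1 + bsum e w

def bcount : List (Letter r) → ℕ
  | [] => 0
  | .inl _ :: w => bcount w
  | .inr _ :: w => bcount w + 1

def filterB : List (Letter r) → List (Letter r)
  | [] => []
  | .inl _ :: w => filterB w
  | .inr z :: w => .inr z :: filterB w

def allB : List (Letter r) → Prop := fun w => ∀ l ∈ w, ∃ z, l = Sum.inr z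

def sectW (e : Fin r → Fin (p - 1) → ZMod p) (x : Fin p) : List (Letter r) → List (Letter r)
  | [] => []
  | .inl s :: w => sectW e (x + ((s : ℤ) : Fin p)) w
  | .inr z :: w =>
      (if h : x.val = p - 1 then (.inr z : Letter r)
       else .inl (z.2 * ((e z.1 ⟨x.val, by have := x.isLt; omega⟩).val : ℤ))) :: sectW e x w

variable {a0 : TreeAut p} {b0 b : Fin r → TreeAut p} {e : Fin r → Fin (p - 1) → ZMod p}

lemma evalW_append (w₁ w₂ : List (Letter r)) :
    evalW a0 b0 (w₁ ++ w₂) = evalW a0 b0 w₁ * evalW a0 b0 w₂ := by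
  induction w₁ with
  | nil => simp [evalW]
  | cons l w ih => cases l <;> simp [evalW, ih, mul_assoc]

lemma evalW_invW (w : List (Letter r)) :
    evalW a0 b0 (invW w) = (evalW a0 b0 w)⁻¹ := by
  induction w with
  | nil => simp [evalW, invW]
  | cons l w ih =>
      cases l <;>
        simp [evalW, invW, evalW_append, ih, mul_inv_rev, zpow_neg]

lemma filterB_allB (w : List (Letter r)) : allB (filterB w) := by
  induction w with
  | nil => intro l hl; simp [filterB] at hl
  | cons l w ih =>
      cases l with
      | inl s => exact ih
      | inr z =>
          intro l hl
          rcases List.mem_cons.1 hl with hl | hl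
          · exact ⟨z, hl⟩
          · exact ih l hl

lemma bsum_filterB (w : List (Letter r)) : bsum e (filterB w) = bsum e w := by
  induction w with
  | nil => rfl
  | cons l w ih => cases l <;> simp [filterB, bsum, ih]

lemma bcount_zero_bsum {w : List (Letter r)} (h : bcount w = 0) : bsum e w = 0 := by
  induction w with
  | nil => rfl
  | cons l w ih =>
      cases l with
      | inl s => exact ih h
      | inr z => simp [bcount] at h

lemma bcount_sectW_le (w : List (Letter r)) (x : Fin p) :
    bcount (sectW e x w) ≤ bcount w := by
  induction w generalizing x with
  | nil => exact le_refl _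
  | cons l w ih =>
      cases l with
      | inl s => exact le_trans (ih _) (le_refl _)
      | inr z =>
          by_cases hx : x.val = p - 1
          · simp only [sectW, dif_pos hx, bcount]
            exact Nat.add_le_add_right (ih x) 1
          · simp only [sectW, dif_neg hx, bcount]
            exact le_trans (ih x) (Nat.le_succ _)

lemma sectW_eq_filterB {w : List (Letter r)} {x : Fin p}
    (h : bcount (sectW e x w) = bcount w) : sectW e x w = filterB w := by
  induction w generalizing x with
  | nil => rfl
  | cons l w ih =>
      cases l with
      | inl s => exact ih h
      | inr z =>
          by_cases hx : x.val = p - 1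
          · simp only [sectW, dif_pos hx, bcount, filterB] at h ⊢
            rw [ih (by omega)]
          · exfalso
            simp only [sectW, dif_neg hx, bcount] at h
            have := bcount_sectW_le (e := e) w x
            omega


lemma sectW_inl {s : ℤ} {x : Fin p} {w : List (Letter r)} :
    sectW e x (.inl s :: w) = sectW e (x + ((s : ℤ) : Fin p)) w := rfl

lemma sectW_inr {z : Fin r × ℤ} {x : Fin p} {w : List (Letter r)} :
    sectW e x (.inr z :: w) =
      (if h : x.val = p - 1 then (.inr z : Letter r)
       else .inl (z.2 * ((e z.1 ⟨x.val, by have := x.isLt; omega⟩).val : ℤ))) :: sectW e x w := rfl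

lemma evalW_inl {s : ℤ} {w : List (Letter r)} :
    evalW a0 b0 (.inl s :: w) = a0 ^ s * evalW a0 b0 w := rfl

lemma evalW_inr {z : Fin r × ℤ} {w : List (Letter r)} :
    evalW a0 b0 (.inr z :: w) = b0 z.1 ^ z.2 * evalW a0 b0 w := rfl

lemma asum_inl {s : ℤ} {w : List (Letter r)} : asum (.inl s :: w) = s + asum w := rfl

lemma asum_inr {z : Fin r × ℤ} {w : List (Letter r)} : asum (.inr z :: w) = asum w := rfl

lemma bsum_inlL {s : ℤ} {w : List (Letter r)} : bsum e (.inl s :: w) = bsum e w := rfl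

lemma bsum_inrL {z : Fin r × ℤ} {w : List (Letter r)} :
    bsum e (.inr z :: w) = (z.2 : ZMod p) • e z.1 + bsum e w := rfl

end SpinalProof

namespace SpinalProof
open TreeAut
open Fin.CommRing
set_option linter.unusedSectionVars false

variable {p : ℕ} [NeZero p] {r : ℕ}
variable {a0 : TreeAut p} {b0 b : Fin r → TreeAut p} {e : Fin r → Fin (p - 1) → ZMod p}

lemma bsum_sum (w : List (Letter r)) :
    ∑ x : Fin p, bsum e (sectW e x w) = bsum e w := by
  induction w with
  | nil => simp [sectW, bsum]
  | cons l w ih =>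
      cases l with
      | inl s =>
          show (∑ x : Fin p, bsum e (sectW e (x + ((s : ℤ) : Fin p)) w)) = bsum e w
          rw [← ih]
          exact Equiv.sum_comp (Equiv.addRight ((s : ℤ) : Fin p))
            (fun x => bsum e (sectW e x w))
      | inr z =>
          have hp1 : p - 1 < p := by have := Fin.pos_iff_nonempty.2 ⟨(0 : Fin p)⟩; omega
          have hstep : ∀ x : Fin p, bsum e (sectW e x (.inr z :: w)) =
              (if x = (⟨p - 1, hp1⟩ : Fin p) then (z.2 : ZMod p) • e z.1 else 0)
                + bsum e (sectW e x w) := by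
            intro x
            by_cases hx : x.val = p - 1
            · have hx' : x = (⟨p - 1, hp1⟩ : Fin p) := Fin.ext hx
              simp only [sectW, dif_pos hx, bsum, if_pos hx']
            · have hx' : ¬ x = (⟨p - 1, hp1⟩ : Fin p) := by
                intro hc; exact hx (by rw [hc])
              simp only [sectW, dif_neg hx, bsum, if_neg hx']
              rw [zero_add]
          rw [show (bsum e (Sum.inr z :: w)) = (z.2 : ZMod p) • e z.1 + bsum e w from rfl]
          simp only [hstep]
          rw [Finset.sum_add_distrib, ih, Finset.sum_ite_eq' Finset.univ]
          simp

section Datum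
variable (hd : IsSpinalDatum p e b)
include hd

lemma evalW_perm_nil (w : List (Letter r)) :
    (evalW (rot p) b w).perm [] = Equiv.addRight ((asum w : Fin p)) := by
  induction w with
  | nil =>
      show (1 : TreeAut p).perm [] = _
      rw [TreeAut.perm_one]; ext y; simp [asum]
  | cons l w ih =>
      cases l with
      | inl s =>
          rw [evalW_inl, perm_nil_mul, rot_zpow_perm, ih, asum_inl]
          refine Equiv.ext fun y => ?_
          simp only [Equiv.trans_apply, Equiv.coe_addRight]
          push_cast
          ring
      | inr z =>
          rw [evalW_inr, perm_nil_mul, rf_zpow (b_perm_nil hd z.1), ih, asum_inr]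
          refine Equiv.ext fun y => ?_
          simp

lemma evalW_rf {w : List (Letter r)} (ha : a0.perm [] = 1) (hb : ∀ i, (b0 i).perm [] = 1) :
    (evalW a0 b0 w).perm [] = 1 := by
  induction w with
  | nil => exact TreeAut.perm_one []
  | cons l w ih =>
      cases l with
      | inl s => exact rf_mul (rf_zpow ha s) ih
      | inr z => exact rf_mul (rf_zpow (hb z.1) z.2) ih

omit hd in
lemma evalW_sect_rf {w : List (Letter r)} (ha : a0.perm [] = 1)
    (hb : ∀ i, (b0 i).perm [] = 1) (x : Fin p) :
    (evalW a0 b0 w).sect x = evalW (a0.sect x) (fun i => (b0 i).sect x) w := by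
  induction w with
  | nil => rfl
  | cons l w ih =>
      cases l with
      | inl s =>
          show (a0 ^ s * evalW a0 b0 w).sect x = _
          rw [sect_mul_rf (rf_zpow ha s), sect_zpow_rf ha, ih]
          rfl
      | inr z =>
          show (b0 z.1 ^ z.2 * evalW a0 b0 w).sect x = _
          rw [sect_mul_rf (rf_zpow (hb z.1) z.2), sect_zpow_rf (hb z.1), ih]
          rfl

lemma evalW_sect (w : List (Letter r)) (x : Fin p) :
    (evalW (rot p) b w).sect x = evalW (rot p) b (sectW e x w) := by
  induction w generalizing x with
  | nil => rfl
  | cons l w ih =>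
      cases l with
      | inl s =>
          rw [evalW_inl, sect_mul, rot_zpow_sect, one_mul, rot_zpow_perm_apply, sectW_inl]
          exact ih _
      | inr z =>
          rw [evalW_inr, sect_mul_rf (rf_zpow (b_perm_nil hd z.1) z.2),
            sect_zpow_rf (b_perm_nil hd z.1), ih x, sectW_inr]
          by_cases hx : x.val = p - 1
          · rw [dif_pos hx, b_sect_spine hd z.1 x hx, evalW_inr]
          · rw [dif_neg hx, b_sect hd z.1 x hx, evalW_inl,
              ← zpow_natCast (rot p), ← zpow_mul, Int.mul_comm]

lemma pureB_coord {w : List (Letter r)} (hw : allB w) (x : Fin p) (hx : x.val < p - 1) :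
    evalW (rot p) b (sectW e x w) = rot p ^ (asum (sectW e x w)) ∧
      ((asum (sectW e x w) : ℤ) : ZMod p) = bsum e w ⟨x.val, hx⟩ := by
  induction w with
  | nil =>
      constructor
      · show (1 : TreeAut p) = rot p ^ (0 : ℤ); rw [zpow_zero]
      · show ((0 : ℤ) : ZMod p) = (0 : Fin (p-1) → ZMod p) ⟨x.val, hx⟩
        simp
  | cons l w ih =>
      cases l with
      | inl s =>
          exfalso
          obtain ⟨z, hz⟩ := hw (.inl s) (by simp)
          exact Sum.inl_ne_inr hz
      | inr z =>
          have hw' : allB w := fun l hl => hw l (List.mem_cons_of_mem _ hl)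
          have hxne : ¬ x.val = p - 1 := by omega
          obtain ⟨ih1, ih2⟩ := ih hw'
          constructor
          · rw [sectW_inr, dif_neg hxne, evalW_inl, ih1, ← zpow_add, asum_inl]
          · rw [sectW_inr, dif_neg hxne, asum_inl, bsum_inrL]
            push_cast
            rw [ih2]
            simp only [Pi.add_apply, Pi.smul_apply, smul_eq_mul]
            rw [ZMod.natCast_val, ZMod.cast_id]

lemma pureB {w : List (Letter r)} (hw : allB w) (h1 : evalW (rot p) b w = 1) :
    bsum e w = 0 := by
  funext n
  have hp1 : (n : ℕ) < p := lt_of_lt_of_le n.isLt (Nat.sub_le p 1)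
  set x : Fin p := ⟨n.val, hp1⟩ with hxdef
  have hx : x.val < p - 1 := n.isLt
  obtain ⟨h2, h3⟩ := pureB_coord (e := e) hd hw x hx
  have h4 : evalW (rot p) b (sectW e x w) = 1 := by
    rw [← evalW_sect hd w x, h1]
    rfl
  rw [h2] at h4
  have h5 : ((asum (sectW e x w) : ℤ) : Fin p) = 0 := (rot_zpow_eq_one_iff _).1 h4
  have h6 : (p : ℤ) ∣ asum (sectW e x w) := (CharP.intCast_eq_zero_iff (Fin p) p _).1 h5
  have h7 : ((asum (sectW e x w) : ℤ) : ZMod p) = 0 :=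
    (ZMod.intCast_zmod_eq_zero_iff_dvd _ p).2 h6
  have hn : (⟨x.val, hx⟩ : Fin (p - 1)) = n := Fin.ext rfl
  rw [← hn, ← h3, h7]
  rfl

lemma keyA {w : List (Letter r)} (h1 : evalW (rot p) b w = 1) :
    ((asum w : ℤ) : Fin p) = 0 := by
  have h2 := evalW_perm_nil hd w
  rw [h1, TreeAut.perm_one] at h2
  have h3 := congrArg (fun (f : Equiv.Perm (Fin p)) => f 0) h2
  simpa using h3.symm

lemma keyB : ∀ (N : ℕ) (w : List (Letter r)), bcount w ≤ N →
    evalW (rot p) b w = 1 → bsum e w = 0 := by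
  intro N
  induction N with
  | zero =>
      intro w hw h1
      exact bcount_zero_bsum (Nat.le_zero.1 hw)
  | succ N ih =>
      intro w hw h1
      by_cases hex : ∃ x : Fin p, bcount (sectW e x w) = bcount w
      · obtain ⟨x₀, hx₀⟩ := hex
        have hfil := sectW_eq_filterB (e := e) hx₀
        have h2 : evalW (rot p) b (filterB w) = 1 := by
          rw [← hfil, ← evalW_sect hd w x₀, h1]
          rfl
        rw [← bsum_filterB]
        exact pureB hd (filterB_allB w) h2
      · push_neg at hex
        have h2 : ∀ x : Fin p, bsum e (sectW e x w) = 0 := by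
          intro x
          apply ih (sectW e x w)
          · have := bcount_sectW_le (e := e) w x
            have := hex x
            omega
          · rw [← evalW_sect hd w x, h1]
            rfl
        rw [← bsum_sum (e := e) w]
        simp [h2]

end Datum
end SpinalProof
namespace SpinalProof
open TreeAut
open Fin.CommRing
set_option linter.unusedSectionVars false

variable {p : ℕ} [NeZero p] {r : ℕ}
variable {a0 : TreeAut p} {b0 b : Fin r → TreeAut p} {e : Fin r → Fin (p - 1) → ZMod p}

lemma evalW_const_one (g : TreeAut p) (w : List (Letter r)) :
    evalW g (fun _ : Fin r => (1 : TreeAut p)) w = g ^ asum w := by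
  induction w with
  | nil => rw [asum]; rfl
  | cons l w ih =>
      cases l with
      | inl s => rw [evalW_inl, ih, asum_inl, zpow_add]
      | inr z => rw [evalW_inr, ih, asum_inr, one_zpow, one_mul]

def zexp (c0 : ℤ) (ci : Fin r → ℤ) : List (Letter r) → ℤ
  | [] => 0
  | .inl s :: w => c0 * s + zexp c0 ci w
  | .inr z :: w => ci z.1 * z.2 + zexp c0 ci w

lemma evalW_rotpow (c0 : ℤ) (ci : Fin r → ℤ) (w : List (Letter r)) :
    evalW (rot p ^ c0) (fun i => rot p ^ ci i) w = rot p ^ zexp c0 ci w := by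
  induction w with
  | nil => rw [zexp]; rfl
  | cons l w ih =>
      cases l with
      | inl s =>
          rw [evalW_inl, ih, ← zpow_mul, ← zpow_add]
          rfl
      | inr z =>
          rw [evalW_inr, ih, ← zpow_mul, ← zpow_add]
          rfl

lemma zexp_cast (c0 : ℤ) (ci : Fin r → ℤ) (n : Fin (p - 1))
    (hc : ∀ i, ((ci i : ℤ) : ZMod p) = e i n) (w : List (Letter r)) :
    ((zexp c0 ci w : ℤ) : ZMod p) =
      (c0 : ZMod p) * ((asum w : ℤ) : ZMod p) + bsum e w n := by
  induction w with
  | nil => simp [zexp, asum, bsum]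
  | cons l w ih =>
      cases l with
      | inl s =>
          rw [zexp, asum_inl, bsum_inlL]
          push_cast
          rw [ih]
          ring
      | inr z =>
          rw [zexp, asum_inr, bsum_inrL]
          push_cast
          rw [ih, hc z.1]
          show _ = _ + (((z.2 : ZMod p) • e z.1 + bsum e w) n)
          simp only [Pi.add_apply, Pi.smul_apply, smul_eq_mul]
          ring

lemma evalW_mem {G : Subgroup (TreeAut p)} (ha : a0 ∈ G) (hb : ∀ i, b0 i ∈ G)
    (w : List (Letter r)) : evalW a0 b0 w ∈ G := by
  induction w with
  | nil => exact one_mem G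
  | cons l w ih =>
      cases l with
      | inl s => exact mul_mem (zpow_mem ha s) ih
      | inr z => exact mul_mem (zpow_mem (hb z.1) z.2) ih

lemma natCast_fin_eq_of_zmod {c d : ℕ} (h : (c : ZMod p) = (d : ZMod p)) :
    ((c : ℕ) : Fin p) = ((d : ℕ) : Fin p) := by
  have hm : c ≡ d [MOD p] := (ZMod.natCast_eq_natCast_iff _ _ _).1 h
  apply Fin.ext
  rw [Fin.val_natCast, Fin.val_natCast]
  exact hm

lemma rot_pow_congr_nat {c d : ℕ} (h : ((c : ℕ) : Fin p) = ((d : ℕ) : Fin p)) :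
    (rot p) ^ c = (rot p) ^ d := by
  have h2 : (rot p) ^ ((c : ℕ) : ℤ) = (rot p) ^ ((d : ℕ) : ℤ) :=
    rot_pow_congr (by push_cast at h ⊢; exact h)
  rwa [zpow_natCast, zpow_natCast] at h2

end SpinalProof
namespace SpinalProof
open TreeAut
open Fin.CommRing
set_option linter.unusedSectionVars false

variable {p : ℕ} [NeZero p] {r : ℕ}
variable {b : Fin r → TreeAut p} {e : Fin r → Fin (p - 1) → ZMod p}

/-- the image of the generator `a`. -/
def TaD (e : Fin r → Fin (p - 1) → ZMod p) (b : Fin r → TreeAut p) (k : Fin r)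
    (j : Fin (p - 1)) : TreeAut p :=
  ((rot p ^ ((1 : ℤ) - (j.val + 1)))⁻¹ * b k * rot p ^ ((1 : ℤ) - (j.val + 1))) ^ ((e k j)⁻¹).val

/-- the image of the generator `b i`. -/
def TiD (b : Fin r → TreeAut p) (i : Fin r) : TreeAut p := (rot p)⁻¹ * b i * rot p

section Datum
variable (hd : IsSpinalDatum p e b) (k : Fin r) (j : Fin (p - 1))
include hd

lemma u_perm_nil : (((rot p ^ ((1 : ℤ) - (j.val + 1)))⁻¹ * b k *
    rot p ^ ((1 : ℤ) - (j.val + 1)))).perm [] = 1 := by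
  rw [perm_nil_mul, perm_nil_mul, perm_nil_inv, rot_zpow_perm, b_perm_nil hd k]
  refine Equiv.ext fun y => ?_
  simp

lemma Ta_perm_nil : (TaD e b k j).perm [] = 1 := rf_pow (u_perm_nil hd k j) _

lemma Ti_perm_nil (i : Fin r) : (TiD b i).perm [] = 1 := by
  rw [TiD, perm_nil_mul, perm_nil_mul, perm_nil_inv, rot_perm_nil, b_perm_nil hd i]
  refine Equiv.ext fun y => ?_
  simp

lemma u_sect (x : Fin p) :
    (((rot p ^ ((1 : ℤ) - (j.val + 1)))⁻¹ * b k * rot p ^ ((1 : ℤ) - (j.val + 1)))).sect x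
      = (b k).sect (x + ((j.val : ℕ) : Fin p)) := by
  rw [sect_mul, rot_zpow_sect, mul_one, sect_mul, ← zpow_neg, rot_zpow_sect, one_mul,
    rot_zpow_perm_apply]
  congr 1
  congr 1
  push_cast
  ring

lemma Ta_sect (x : Fin p) :
    (TaD e b k j).sect x = ((b k).sect (x + ((j.val : ℕ) : Fin p))) ^ ((e k j)⁻¹).val := by
  rw [TaD, sect_pow_rf (u_perm_nil hd k j), u_sect hd k j]

lemma cast_pm1 : ((p - 1 : ℕ) : Fin p) = -1 := by
  have h1 : (1 : ℕ) ≤ p := Nat.one_le_iff_ne_zero.2 (NeZero.ne p)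
  rw [Nat.cast_sub h1, Fin.natCast_self, Nat.cast_one, zero_sub]

lemma Ti_sect (i : Fin r) (x : Fin p) :
    (TiD b i).sect x = (b i).sect (x + ((p - 1 : ℕ) : Fin p)) := by
  rw [TiD, sect_mul, rot_sect, mul_one, sect_mul, sect_inv, rot_sect, inv_one, one_mul,
    perm_nil_inv, rot_perm_nil]
  congr 1
  rw [Equiv.symm_apply_eq, cast_pm1 (hd := hd)]
  simp

end Datum
end SpinalProof
namespace SpinalProof
open TreeAut
open Fin.CommRing
set_option linter.unusedSectionVars false

variable {p : ℕ} [NeZero p] {r : ℕ}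
variable {b : Fin r → TreeAut p} {e : Fin r → Fin (p - 1) → ZMod p}

def x1D (p : ℕ) [NeZero p] (j : Fin (p - 1)) : Fin p :=
  ⟨p - 1 - j.val, by have : 0 < p := Nat.pos_of_ne_zero (NeZero.ne p); omega⟩

lemma val_natCast_j (j : Fin (p - 1)) : (((j.val : ℕ)) : Fin p).val = j.val := by
  rw [Fin.val_natCast]
  exact Nat.mod_eq_of_lt (lt_of_lt_of_le j.isLt (Nat.sub_le p 1))

lemma val_natCast_pm1 : (((p - 1 : ℕ)) : Fin p).val = p - 1 := by
  rw [Fin.val_natCast]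
  exact Nat.mod_eq_of_lt (by have : 0 < p := Nat.pos_of_ne_zero (NeZero.ne p); omega)

section Datum
variable (hd : IsSpinalDatum p e b) (k : Fin r) (j : Fin (p - 1))
include hd

lemma Ta_sect_zero [Fact p.Prime] (hkj : e k j ≠ 0) : (TaD e b k j).sect 0 = rot p := by
  rw [Ta_sect hd k j 0, zero_add]
  have hne : (((j.val : ℕ)) : Fin p).val ≠ p - 1 := by
    rw [val_natCast_j]; have := j.isLt; omega
  rw [b_sect hd k _ hne]
  have hjj : ∀ (h : (((j.val : ℕ)) : Fin p).val < p - 1),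
      (⟨(((j.val : ℕ)) : Fin p).val, h⟩ : Fin (p - 1)) = j :=
    fun h => Fin.ext (val_natCast_j j)
  rw [hjj, ← pow_mul]
  have hcast : (((e k j).val * (e k j)⁻¹.val : ℕ) : Fin p) = ((1 : ℕ) : Fin p) := by
    apply natCast_fin_eq_of_zmod
    push_cast
    rw [ZMod.natCast_val, ZMod.cast_id, ZMod.natCast_val, ZMod.cast_id,
      mul_inv_cancel₀ hkj]
  rw [rot_pow_congr_nat hcast, pow_one]

lemma Ti_sect_zero (i : Fin r) : (TiD b i).sect 0 = b i := by
  rw [Ti_sect hd i 0, zero_add, b_sect_spine hd i _ val_natCast_pm1]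

lemma x1_add_j_val : ((x1D p j) + ((j.val : ℕ) : Fin p)).val = p - 1 := by
  rw [Fin.val_add, val_natCast_j]
  have h1 : (x1D p j).val = p - 1 - j.val := rfl
  rw [h1]
  have h2 : p - 1 - j.val + j.val = p - 1 := by have := j.isLt; omega
  rw [h2]
  exact Nat.mod_eq_of_lt (by have : 0 < p := Nat.pos_of_ne_zero (NeZero.ne p); omega)

lemma Ta_sect_x1 : (TaD e b k j).sect (x1D p j) = (b k) ^ ((e k j)⁻¹).val := by
  rw [Ta_sect hd k j, b_sect_spine hd k _ (x1_add_j_val hd j)]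

lemma x1_sub_one_val (hp3 : 3 ≤ p) :
    ((x1D p j) + ((p - 1 : ℕ) : Fin p)).val = p - 2 - j.val := by
  rw [Fin.val_add, val_natCast_pm1]
  have h1 : (x1D p j).val = p - 1 - j.val := rfl
  rw [h1]
  have hj := j.isLt
  have h2 : p - 1 - j.val + (p - 1) = p + (p - 2 - j.val) := by omega
  rw [h2, Nat.add_mod_left]
  exact Nat.mod_eq_of_lt (by omega)

lemma Ti_sect_x1 (hp3 : 3 ≤ p)
    (hcol : ∀ i : Fin r, vcomp (e i) (p - (j.val + 1)) = 0) (i : Fin r) :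
    (TiD b i).sect (x1D p j) = 1 := by
  have hj := j.isLt
  have hlt : p - 2 - j.val < p - 1 := by omega
  have hne : ((x1D p j) + ((p - 1 : ℕ) : Fin p)).val ≠ p - 1 := by
    rw [x1_sub_one_val hd j hp3]; omega
  rw [Ti_sect hd i, b_sect hd i _ hne]
  have eidx : ∀ (v₁ v₂ : ℕ) (h₁ : v₁ < p - 1) (h₂ : v₂ < p - 1), v₁ = v₂ →
      e i ⟨v₁, h₁⟩ = e i ⟨v₂, h₂⟩ := by rintro v₁ v₂ h₁ h₂ rfl; rfl
  have hcol' : e i ⟨p - 2 - j.val, hlt⟩ = 0 := by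
    have h := hcol i
    rw [vcomp] at h
    have hn0 : (p - (j.val + 1)) % p = p - (j.val + 1) := Nat.mod_eq_of_lt (by omega)
    have hne0 : ¬ ((p - (j.val + 1)) % p = 0) := by rw [hn0]; omega
    rw [dif_neg hne0] at h
    exact (eidx _ _ hlt (by omega) (by omega)).trans h
  have key : ∀ (h : ((x1D p j) + ((p - 1 : ℕ) : Fin p)).val < p - 1),
      e i ⟨((x1D p j) + ((p - 1 : ℕ) : Fin p)).val, h⟩ = 0 :=
    fun h => (eidx _ _ h hlt (x1_sub_one_val hd j hp3)).trans hcol'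
  rw [key, ZMod.val_zero, pow_zero]

end Datum
end SpinalProof
namespace SpinalProof
open TreeAut
open Fin.CommRing
set_option linter.unusedSectionVars false

variable {p : ℕ} [NeZero p] {r : ℕ}
variable {b : Fin r → TreeAut p} {e : Fin r → Fin (p - 1) → ZMod p}

section Datum
variable [Fact p.Prime] (hd : IsSpinalDatum p e b) (k : Fin r) (j : Fin (p - 1))
include hd

lemma main_one (hp3 : 3 ≤ p) (hkj : e k j ≠ 0)
    (hcol : ∀ i : Fin r, vcomp (e i) (p - (j.val + 1)) = 0)
    (w : List (Letter r)) (h1 : evalW (rot p) b w = 1) :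
    evalW (TaD e b k j) (TiD b) w = 1 := by
  have hα : ((asum w : ℤ) : Fin p) = 0 := keyA hd h1
  have hdvd : (p : ℤ) ∣ asum w := (CharP.intCast_eq_zero_iff (Fin p) p _).1 hα
  have hαz : ((asum w : ℤ) : ZMod p) = 0 := (ZMod.intCast_zmod_eq_zero_iff_dvd _ _).2 hdvd
  have hβ : bsum e w = 0 := keyB hd (bcount w) w le_rfl h1
  apply eq_one_ofPerm
  · exact evalW_rf hd (Ta_perm_nil hd k j) (Ti_perm_nil hd)
  · intro x
    rw [evalW_sect_rf (Ta_perm_nil hd k j) (Ti_perm_nil hd) x]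
    by_cases hx0 : x = 0
    · subst hx0
      rw [Ta_sect_zero hd k j hkj,
        show (fun i => (TiD b i).sect 0) = b from funext (Ti_sect_zero hd)]
      exact h1
    by_cases hx1 : x = x1D p j
    · subst hx1
      rw [Ta_sect_x1 hd k j,
        show (fun i => (TiD b i).sect (x1D p j)) = (fun _ => (1 : TreeAut p)) from
          funext (Ti_sect_x1 hd j hp3 hcol)]
      rw [evalW_const_one, ← zpow_natCast (b k), ← zpow_mul]
      refine b_zpow_eq_one hd k ?_
      push_cast
      rw [hα, mul_zero]
    · have hp0 : 0 < p := Nat.pos_of_ne_zero (NeZero.ne p)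
      have hxv1 : 1 ≤ x.val := by
        rcases Nat.eq_zero_or_pos x.val with h | h
        · exact absurd (Fin.ext h) hx0
        · exact h
      have hq : (x + ((p - 1 : ℕ) : Fin p)).val = x.val - 1 := by
        rw [Fin.val_add, val_natCast_pm1]
        have := x.isLt
        have h2 : x.val + (p - 1) = p + (x.val - 1) := by omega
        rw [h2, Nat.add_mod_left]
        exact Nat.mod_eq_of_lt (by omega)
      have hqlt : (x + ((p - 1 : ℕ) : Fin p)).val < p - 1 := by
        rw [hq]; have := x.isLt; omega
      have hqne : (x + ((p - 1 : ℕ) : Fin p)).val ≠ p - 1 := by omega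
      set nx : Fin (p - 1) := ⟨(x + ((p - 1 : ℕ) : Fin p)).val, hqlt⟩ with hnx
      have hmne : (x + ((j.val : ℕ) : Fin p)).val ≠ p - 1 := by
        rw [Fin.val_add, val_natCast_j]
        intro hc
        have hj := j.isLt
        have hxlt := x.isLt
        apply hx1
        apply Fin.ext
        show x.val = p - 1 - j.val
        rcases Nat.lt_or_ge (x.val + j.val) p with h | h
        · rw [Nat.mod_eq_of_lt h] at hc; omega
        · have h3 : x.val + j.val = p + (x.val + j.val - p) := by omega
          rw [h3, Nat.add_mod_left, Nat.mod_eq_of_lt (by omega)] at hc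
          omega
      have hmlt : (x + ((j.val : ℕ) : Fin p)).val < p - 1 := by
        have := (x + ((j.val : ℕ) : Fin p)).isLt; omega
      set mx : Fin (p - 1) := ⟨(x + ((j.val : ℕ) : Fin p)).val, hmlt⟩ with hmx
      have hTa : (TaD e b k j).sect x =
          rot p ^ ((((e k mx).val * (e k j)⁻¹.val : ℕ) : ℤ)) := by
        rw [Ta_sect hd k j, b_sect hd k _ hmne, ← pow_mul, zpow_natCast]
      have hTi : ∀ i, (TiD b i).sect x = rot p ^ (((e i nx).val : ℤ)) := by
        intro i
        rw [Ti_sect hd i, b_sect hd i _ hqne, zpow_natCast]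
      rw [hTa, show (fun i => (TiD b i).sect x)
            = (fun i => rot p ^ (((e i nx).val : ℤ))) from funext hTi,
        evalW_rotpow]
      apply rot_zpow_eq_one
      have hzc := zexp_cast (e := e) ((((e k mx).val * (e k j)⁻¹.val : ℕ) : ℤ))
        (fun i => (((e i nx).val : ℕ) : ℤ)) nx
        (fun i => by push_cast; rw [ZMod.natCast_val, ZMod.cast_id]) w
      have hβn : bsum e w nx = 0 := by rw [hβ]; rfl
      rw [hαz, hβn, mul_zero, zero_add] at hzc
      have hdvd2 : (p : ℤ) ∣ zexp _ _ w := (ZMod.intCast_zmod_eq_zero_iff_dvd _ _).1 hzc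
      exact (CharP.intCast_eq_zero_iff (Fin p) p _).2 hdvd2

end Datum
end SpinalProof

open SpinalProof TreeAut

/-- **Liftability of multi-edge spinal groups.** Let `p ≥ 3` be a prime,
`1 ≤ r < p`, and `G_{E^(p)}` the multi-edge spinal group defined by an `r`-tuple
of linearly independent vectors. If there are `k ∈ {1,…,r}` and `j ∈ {1,…,p-1}`
with `e_{k,j} ≠ 0` and `e_{i,p-j} = 0` for all `i`, then `G_{E^(p)}` is liftable:
the assignment `σ(a) = (b_k^{a^{1-j}})^{(e_{k,j})⁻¹}`, `σ(b_i) = b_i^a` extends to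
a homomorphism `σ : G → St_G(0)` with `π₀ ∘ σ = id`.
(Lean's `j : Fin (p-1)` is the paper's `j = j.val + 1`; `g^h = h⁻¹gh`.) -/
theorem spinal_liftable (p : ℕ) [Fact p.Prime] [NeZero p] (hp3 : 3 ≤ p)
    (r : ℕ) (hr1 : 1 ≤ r) (hrp : r < p)
    (e : Fin r → Fin (p - 1) → ZMod p)
    (b : Fin r → TreeAut p)
    (hdatum : IsSpinalDatum p e b)
    (k : Fin r) (j : Fin (p - 1))
    (hkj : e k j ≠ 0)
    (hcol : ∀ i : Fin r, vcomp (e i) (p - (j.val + 1)) = 0) :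
    ∃ σ : spinalGroup p b →* TreeAut p,
      (∀ g, σ g ∈ spinalGroup p b) ∧
      (∀ g, (σ g).act [(0 : Fin p)] = [(0 : Fin p)]) ∧
      (∀ g : spinalGroup p b, (σ g).sect 0 = (g : TreeAut p)) ∧
      σ ⟨rot p, rot_mem_spinal p b⟩ =
        ((rot p ^ ((1 : ℤ) - (j.val + 1)))⁻¹ * b k *
            rot p ^ ((1 : ℤ) - (j.val + 1))) ^ ((e k j)⁻¹).val ∧
      (∀ i : Fin r, σ ⟨b i, b_mem_spinal p b i⟩ = (rot p)⁻¹ * b i * rot p) := by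
  classical
  have hd := hdatum
  -- every element of the group is the value of some word
  have hrep : ∀ g ∈ spinalGroup p b,
      ∃ w : List (Letter r), evalW (rot p) b w = g := by
    intro g hg
    induction hg using Subgroup.closure_induction with
    | mem x hx =>
        rcases hx with rfl | ⟨i, rfl⟩
        · exact ⟨[.inl 1], by simp [evalW]⟩
        · exact ⟨[.inr (i, 1)], by simp [evalW]⟩
    | one => exact ⟨[], rfl⟩
    | mul x y hx hy ihx ihy =>
        obtain ⟨w₁, hw₁⟩ := ihx
        obtain ⟨w₂, hw₂⟩ := ihy
        exact ⟨w₁ ++ w₂, by rw [evalW_append, hw₁, hw₂]⟩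
    | inv x hx ih =>
        obtain ⟨w, hw⟩ := ih
        exact ⟨invW w, by rw [evalW_invW, hw]⟩
  have cong : ∀ w w' : List (Letter r),
      evalW (rot p) b w = evalW (rot p) b w' →
      evalW (TaD e b k j) (TiD b) w = evalW (TaD e b k j) (TiD b) w' := by
    intro w w' h
    have h2 : evalW (rot p) b (w ++ invW w') = 1 := by
      rw [evalW_append, evalW_invW, h, mul_inv_cancel]
    have h3 := main_one hd k j hp3 hkj hcol _ h2
    rw [evalW_append, evalW_invW] at h3
    exact mul_inv_eq_one.1 h3
  choose wd hwd using fun (g : spinalGroup p b) => hrep g.1 g.2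
  have hTAmem : TaD e b k j ∈ spinalGroup p b := by
    show ((rot p ^ ((1 : ℤ) - (j.val + 1)))⁻¹ * b k *
        rot p ^ ((1 : ℤ) - (j.val + 1))) ^ ((e k j)⁻¹).val ∈ spinalGroup p b
    exact pow_mem (mul_mem (mul_mem (inv_mem (zpow_mem (rot_mem_spinal p b) _))
      (b_mem_spinal p b k)) (zpow_mem (rot_mem_spinal p b) _)) _
  have hTImem : ∀ i, TiD b i ∈ spinalGroup p b := by
    intro i
    show (rot p)⁻¹ * b i * rot p ∈ spinalGroup p b
    exact mul_mem (mul_mem (inv_mem (rot_mem_spinal p b)) (b_mem_spinal p b i))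
      (rot_mem_spinal p b)
  refine ⟨{ toFun := fun g => evalW (TaD e b k j) (TiD b) (wd g)
            map_one' := ?_
            map_mul' := ?_ }, ?_, ?_, ?_, ?_, ?_⟩
  · show evalW (TaD e b k j) (TiD b) (wd 1) = 1
    have h := cong (wd 1) [] (by rw [hwd 1]; rfl)
    exact h
  · intro g h
    have h2 := cong (wd (g * h)) (wd g ++ wd h)
      (by rw [hwd (g * h), evalW_append, hwd g, hwd h]; rfl)
    show evalW (TaD e b k j) (TiD b) (wd (g * h)) =
      evalW (TaD e b k j) (TiD b) (wd g) * evalW (TaD e b k j) (TiD b) (wd h)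
    rw [h2, evalW_append]
  · intro g
    show evalW (TaD e b k j) (TiD b) (wd g) ∈ spinalGroup p b
    exact evalW_mem hTAmem hTImem _
  · intro g
    show (evalW (TaD e b k j) (TiD b) (wd g)).act [(0 : Fin p)] = [(0 : Fin p)]
    rw [act_single, evalW_rf hd (Ta_perm_nil hd k j) (Ti_perm_nil hd)]
    simp
  · intro g
    show (evalW (TaD e b k j) (TiD b) (wd g)).sect 0 = (g : TreeAut p)
    rw [evalW_sect_rf (Ta_perm_nil hd k j) (Ti_perm_nil hd) 0,
      Ta_sect_zero hd k j hkj,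
      show (fun i => (TiD b i).sect 0) = b from funext (Ti_sect_zero hd)]
    exact hwd g
  · have h := cong (wd ⟨rot p, rot_mem_spinal p b⟩) [.inl 1]
      (by rw [hwd]; simp [evalW])
    show evalW (TaD e b k j) (TiD b) (wd ⟨rot p, rot_mem_spinal p b⟩) = _
    rw [h]
    show TaD e b k j ^ (1 : ℤ) * 1 = _
    rw [zpow_one, mul_one]
    rfl
  · intro i
    have h := cong (wd ⟨b i, b_mem_spinal p b i⟩) [.inr (i, 1)]
      (by rw [hwd]; simp [evalW])
    show evalW (TaD e b k j) (TiD b) (wd ⟨b i, b_mem_spinal p b i⟩) = _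
    rw [h]
    show TiD b i ^ (1 : ℤ) * 1 = _
    rw [zpow_one, mul_one]
    rfl
end

section
/- Let p ≥ 3 be a prime and let G_e = ⟨a, b, c⟩ be the EGS-group defined by a non-zero vector e = (e_1,…,e_{p−1}) ∈ (Z/pZ)^{p−1}. Suppose there exists j ∈ {1,…,p−1} such that e_j ≠ 0 and e_{p−j} = 0. Then G_e is liftable: the assignment σ(a) = (b^{a^{1−j}})^{(e_j)^{−1}}, σ(b) = b^a, σ(c) = c extends to a group homomorphism σ : G_e → St_{G_e}(0) such that π_0 ∘ σ is the identity on G_e. -/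
open Fin.NatCast in
/-- The defining wreath recursions of the generators `b, c` of the EGS-group defined
by a non-zero vector `e ∈ (ℤ/pℤ)^{p-1}` (Lean's `n : Fin (p-1)` is the paper's
`n = n.val + 1`): `b = (a^{e_1},…,a^{e_{p-1}},b)` and `c = (c,a^{e_1},…,a^{e_{p-1}})`,
i.e. `b` and `c` fix all first-level vertices, `b|_{n-1} = a^{e_n}`, `b|_{p-1} = b`,
`c|_0 = c`, and `c|_n = a^{e_n}` for `1 ≤ n ≤ p-1`. -/
def IsEGSDatum (p : ℕ) [NeZero p]
    (e : Fin (p - 1) → ZMod p) (b c : TreeAut p) : Prop :=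
  e ≠ 0 ∧
  (∀ x : Fin p, b.act [x] = [x]) ∧
  b.sect (((p - 1 : ℕ) : Fin p)) = b ∧
  (∀ n : Fin (p - 1), b.sect ((n.val : ℕ) : Fin p) = rot p ^ (e n).val) ∧
  (∀ x : Fin p, c.act [x] = [x]) ∧
  c.sect 0 = c ∧
  (∀ n : Fin (p - 1), c.sect ((n.val + 1 : ℕ) : Fin p) = rot p ^ (e n).val)

/-- The EGS-group `G_e = ⟨a, b, c⟩`. -/
def EGSGroup (p : ℕ) [NeZero p] (b c : TreeAut p) : Subgroup (TreeAut p) :=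
  Subgroup.closure {rot p, b, c}

theorem rot_mem_EGS (p : ℕ) [NeZero p] (b c : TreeAut p) : rot p ∈ EGSGroup p b c :=
  Subgroup.subset_closure (by simp)

theorem b_mem_EGS (p : ℕ) [NeZero p] (b c : TreeAut p) : b ∈ EGSGroup p b c :=
  Subgroup.subset_closure (by simp)

theorem c_mem_EGS (p : ℕ) [NeZero p] (b c : TreeAut p) : c ∈ EGSGroup p b c :=
  Subgroup.subset_closure (by simp)
set_option linter.unusedSectionVars false
open Fin.NatCast Fin.CommRing

section EGSAux

namespace TreeAut

variable {p : ℕ}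

theorem act_nil (g : TreeAut p) : g.act [] = [] := rfl

theorem sect_perm (g : TreeAut p) (x : Fin p) (v : List (Fin p)) :
    (g.sect x).perm v = g.perm (x :: v) := rfl

theorem eq_of_root_sect {g h : TreeAut p} (hroot : g.perm [] = h.perm [])
    (hsect : ∀ x, g.sect x = h.sect x) : g = h := by
  apply TreeAut.ext
  funext v
  cases v with
  | nil => exact hroot
  | cons x w => exact congrArg (fun t => TreeAut.perm t w) (hsect x)

theorem perm_mul_nil (g h : TreeAut p) :
    (g * h).perm [] = (g.perm []).trans (h.perm []) := rfl

theorem perm_inv_nil (g : TreeAut p) : (g⁻¹).perm [] = (g.perm []).symm := rfl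

theorem act_single_s3 (g : TreeAut p) (x : Fin p) : g.act [x] = [g.perm [] x] := rfl

theorem perm_nil_mul_apply (g h : TreeAut p) (x : Fin p) :
    (g * h).perm [] x = h.perm [] (g.perm [] x) := rfl

/-- root-trivial: mul -/
theorem rt_mul {g h : TreeAut p} (hg : g.perm [] = 1) (hh : h.perm [] = 1) :
    (g * h).perm [] = 1 := by
  rw [perm_mul_nil, hg, hh]; rfl

theorem rt_inv {g : TreeAut p} (hg : g.perm [] = 1) : (g⁻¹).perm [] = 1 := by
  rw [perm_inv_nil, hg]; rfl

theorem rt_pow {g : TreeAut p} (hg : g.perm [] = 1) (n : ℕ) : (g ^ n).perm [] = 1 := by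
  induction n with
  | zero => rfl
  | succ n ih => rw [pow_succ]; exact rt_mul ih hg

theorem sect_mul_rt {g : TreeAut p} (hg : g.perm [] = 1) (h : TreeAut p) (x : Fin p) :
    (g * h).sect x = g.sect x * h.sect x := by
  rw [sect_mul, hg, Equiv.Perm.one_apply]

theorem sect_inv_rt {g : TreeAut p} (hg : g.perm [] = 1) (x : Fin p) :
    (g⁻¹).sect x = (g.sect x)⁻¹ := by
  rw [sect_inv, hg]; rfl

theorem sect_pow_rt {g : TreeAut p} (hg : g.perm [] = 1) (n : ℕ) (x : Fin p) :
    (g ^ n).sect x = (g.sect x) ^ n := by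
  induction n with
  | zero => rw [pow_zero, pow_zero, sect_one]
  | succ n ih => rw [pow_succ, pow_succ, sect_mul_rt (rt_pow hg n), ih]

theorem act_single_zero {g : TreeAut p} [NeZero p] (hg : g.perm [] = 1) :
    g.act [(0 : Fin p)] = [(0 : Fin p)] := by
  rw [act_single_s3, hg, Equiv.Perm.one_apply]

/-- An automorphism with trivial root permutation, trivial sections away from `x₀`,
and itself as the section at `x₀`, is trivial. -/
theorem eq_one_of_recursive {t : TreeAut p} (x₀ : Fin p) (hroot : t.perm [] = 1)
    (hs : ∀ x, x ≠ x₀ → t.sect x = 1) (hself : t.sect x₀ = t) : t = 1 := by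
  have key : ∀ v, t.perm v = 1 := by
    intro v
    induction v with
    | nil => exact hroot
    | cons x w ih =>
      show (t.sect x).perm w = 1
      by_cases hx : x = x₀
      · rw [hx, hself]
        exact ih
      · rw [hs x hx]
        rfl
  apply TreeAut.ext
  funext v
  exact key v

end TreeAut

namespace EGSAux

open TreeAut

variable {p : ℕ} [NeZero p]

/-- Rooted rotation automorphism. -/
def rotF (d : Fin p) : TreeAut p :=
  ⟨fun v => if v = [] then Equiv.addRight d else 1⟩

theorem rotF_perm_nil (d : Fin p) : (rotF d).perm [] = Equiv.addRight d := rfl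

theorem rotF_sect (d : Fin p) (x : Fin p) : (rotF (p := p) d).sect x = 1 := by
  apply TreeAut.ext
  funext v
  show (if x :: v = [] then Equiv.addRight d else 1) = TreeAut.perm 1 v
  rw [if_neg (List.cons_ne_nil x v)]
  rfl

theorem rotF_zero : rotF (p := p) 0 = 1 := by
  apply eq_of_root_sect
  · rw [rotF_perm_nil, perm_one]
    ext x
    simp
  · intro x
    rw [rotF_sect, sect_one]

theorem rotF_mul (d d' : Fin p) : rotF d * rotF d' = rotF (d + d') := by
  apply eq_of_root_sect
  · rw [perm_mul_nil, rotF_perm_nil, rotF_perm_nil, rotF_perm_nil]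
    ext x
    simp [add_assoc]
  · intro x
    rw [sect_mul, rotF_sect, rotF_sect, rotF_sect, one_mul]

theorem rot_eq_rotF : rot p = rotF 1 := rfl

theorem rot_pow (n : ℕ) : rot p ^ n = rotF ((n : Fin p)) := by
  induction n with
  | zero => rw [pow_zero, Nat.cast_zero, rotF_zero]
  | succ n ih =>
    rw [pow_succ, ih, rot_eq_rotF, rotF_mul, Nat.cast_add, Nat.cast_one]

theorem rot_pow_p : rot p ^ p = 1 := by
  rw [rot_pow, Fin.natCast_self, rotF_zero]

theorem rotF_inv (d : Fin p) : (rotF (p := p) d)⁻¹ = rotF (-d) := by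
  apply inv_eq_of_mul_eq_one_right
  rw [rotF_mul, add_neg_cancel, rotF_zero]

theorem rot_pow_mod (n : ℕ) : rot p ^ n = rot p ^ (n % p) :=
  pow_eq_pow_mod n rot_pow_p

/-- The standard embedding into the subtree at `0`. -/
def emb (g : TreeAut p) : TreeAut p :=
  ⟨fun v => match v with
    | [] => 1
    | x :: w => if x = 0 then g.perm w else 1⟩

theorem emb_perm_nil (g : TreeAut p) : (emb g).perm [] = 1 := rfl

theorem emb_sect_zero (g : TreeAut p) : (emb g).sect 0 = g := by
  apply TreeAut.ext
  funext v
  show (if (0 : Fin p) = 0 then g.perm v else 1) = g.perm v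
  rw [if_pos rfl]

theorem emb_sect_ne (g : TreeAut p) (x : Fin p) (hx : x ≠ 0) : (emb g).sect x = 1 := by
  apply TreeAut.ext
  funext v
  show (if x = 0 then g.perm v else 1) = _
  rw [if_neg hx]
  rfl

theorem emb_mul (g h : TreeAut p) : emb (g * h) = emb g * emb h := by
  apply eq_of_root_sect
  · rw [rt_mul (emb_perm_nil g) (emb_perm_nil h)]
    rfl
  · intro x
    rw [sect_mul_rt (emb_perm_nil g)]
    by_cases hx : x = 0
    · subst hx
      rw [emb_sect_zero, emb_sect_zero, emb_sect_zero]
    · rw [emb_sect_ne _ _ hx, emb_sect_ne _ _ hx, emb_sect_ne _ _ hx, one_mul]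

theorem emb_one : emb (p := p) 1 = 1 := by
  apply eq_of_root_sect
  · rfl
  · intro x
    by_cases hx : x = 0
    · subst hx; rw [emb_sect_zero, sect_one]
    · rw [emb_sect_ne _ _ hx, sect_one]

theorem emb_inv (g : TreeAut p) : (emb g)⁻¹ = emb g⁻¹ := by
  have : emb g * emb g⁻¹ = 1 := by rw [← emb_mul, mul_inv_cancel, emb_one]
  exact inv_eq_of_mul_eq_one_right this

/-- Commutation of an `emb` with an automorphism supported away from the `0`-subtree. -/
theorem emb_commute {t : TreeAut p} (g : TreeAut p) (hroot : t.perm [] = 1)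
    (h0 : t.sect 0 = 1) : Commute (emb g) t := by
  apply eq_of_root_sect
  · rw [rt_mul (emb_perm_nil g) hroot, rt_mul hroot (emb_perm_nil g)]
  · intro x
    rw [sect_mul_rt (emb_perm_nil g), sect_mul_rt hroot]
    by_cases hx : x = 0
    · subst hx
      rw [h0, emb_sect_zero, mul_one, one_mul]
    · rw [emb_sect_ne _ _ hx, mul_one, one_mul]

/-- Commutation of two root-trivial automorphisms with sectionwise commuting sections. -/
theorem commute_of_sect {s t : TreeAut p} (hs : s.perm [] = 1) (ht : t.perm [] = 1)
    (h : ∀ x, Commute (s.sect x) (t.sect x)) : Commute s t := by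
  apply eq_of_root_sect
  · rw [rt_mul hs ht, rt_mul ht hs]
  · intro x
    rw [sect_mul_rt hs, sect_mul_rt ht]
    exact h x

end EGSAux
namespace EGSAux

open TreeAut Finset

variable {p : ℕ} [NeZero p]

/-- rotation-type permutations -/
def IsRot (π : Equiv.Perm (Fin p)) : Prop := ∀ x, π x = x + π 0

theorem isRot_one : IsRot (1 : Equiv.Perm (Fin p)) := by
  intro x
  simp

theorem isRot_addRight (d : Fin p) : IsRot (Equiv.addRight d) := by
  intro x
  simp

theorem isRot_trans {π τ : Equiv.Perm (Fin p)} (hπ : IsRot π) (hτ : IsRot τ) :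
    IsRot (π.trans τ) := by
  intro x
  simp only [Equiv.trans_apply]
  rw [hτ (π x), hπ x, hπ 0, hτ (0 + π 0)]
  abel

theorem isRot_symm_apply {π : Equiv.Perm (Fin p)} (hπ : IsRot π) (x : Fin p) :
    π.symm x = x - π 0 := by
  apply π.injective
  rw [Equiv.apply_symm_apply, hπ (x - π 0), sub_add_cancel]

theorem isRot_symm {π : Equiv.Perm (Fin p)} (hπ : IsRot π) : IsRot π.symm := by
  intro x
  rw [isRot_symm_apply hπ, isRot_symm_apply hπ, zero_sub, sub_eq_add_neg]

/-- cast `Fin p → ZMod p` -/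
def iz (x : Fin p) : ZMod p := (x.val : ZMod p)

theorem iz_add (x y : Fin p) : iz (x + y) = iz x + iz y := by
  unfold iz
  rw [Fin.add_def]
  show (((x.val + y.val) % p : ℕ) : ZMod p) = _
  rw [ZMod.natCast_mod, Nat.cast_add]

theorem iz_zero : iz (0 : Fin p) = 0 := by
  unfold iz
  simp

theorem iz_neg (x : Fin p) : iz (-x) = -iz x := by
  have := iz_add x (-x)
  rw [add_neg_cancel, iz_zero] at this
  linear_combination -this

theorem iz_natCast (n : ℕ) : iz ((n : Fin p)) = (n : ZMod p) := by
  unfold iz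
  rw [Fin.val_natCast, ZMod.natCast_mod]

/-- the level-one logarithm vector -/
def vec (g : TreeAut p) : Fin p → ZMod p := fun x => iz ((g.sect x).perm [] 0)

/-- the binomial functionals -/
def phi (k : ℕ) (v : Fin p → ZMod p) : ZMod p :=
  ∑ x : Fin p, (Nat.choose x.val k : ZMod p) * v x

theorem phi_add (k : ℕ) (u v : Fin p → ZMod p) : phi k (u + v) = phi k u + phi k v := by
  simp [phi, Pi.add_apply, mul_add, Finset.sum_add_distrib]

theorem phi_neg (k : ℕ) (v : Fin p → ZMod p) : phi k (-v) = -phi k v := by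
  simp [phi]

theorem phi_zero (k : ℕ) : phi (p := p) k 0 = 0 := by
  simp [phi]

/-- backward shift -/
def shiftF (d : Fin p) (v : Fin p → ZMod p) : Fin p → ZMod p := fun x => v (x + d)

theorem shiftF_zero (v : Fin p → ZMod p) : shiftF 0 v = v := by
  funext x
  show v (x + 0) = v x
  rw [add_zero]

theorem shiftF_add (d d' : Fin p) (v : Fin p → ZMod p) :
    shiftF d (shiftF d' v) = shiftF (d + d') v := by
  funext x
  show v (x + d + d') = v (x + (d + d'))
  rw [add_assoc]

/-- If the vector `v` is not zero, some binomial functional below `p` is non-zero. -/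
theorem phi_exists_ne_zero {v : Fin p → ZMod p} (hv : v ≠ 0) :
    ∃ t < p, phi t v ≠ 0 := by
  by_contra hcon
  push_neg at hcon
  apply hv
  funext x
  suffices h : ∀ n : ℕ, ∀ x : Fin p, p - 1 - x.val = n → v x = 0 by
    exact h _ x rfl
  intro n
  induction n using Nat.strong_induction_on with
  | _ n ih =>
    intro x hx
    have hsum : phi x.val v = 0 := hcon x.val x.isLt
    have hkey : phi x.val v = v x := by
      unfold phi
      rw [Finset.sum_eq_single x]
      · rw [Nat.choose_self, Nat.cast_one, one_mul]
      · intro y _ hyx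
        rcases lt_trichotomy y.val x.val with h1 | h1 | h1
        · rw [Nat.choose_eq_zero_of_lt h1, Nat.cast_zero, zero_mul]
        · exact absurd (Fin.ext h1) hyx
        · have hy : v y = 0 := ih (p - 1 - y.val) (by omega) y rfl
          rw [hy, mul_zero]
      · intro hxmem
        exact absurd (Finset.mem_univ x) hxmem
    rw [← hkey, hsum]

/-- the Pascal recurrence for the functionals under backward shift. -/
theorem phi_S [Fact p.Prime] {t : ℕ} (ht1 : 1 ≤ t) (htp : t < p) (w : Fin p → ZMod p) :
    phi t (fun x => w (x - 1)) = phi t w + phi (t - 1) w := by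
  have hp : p.Prime := Fact.out
  unfold phi
  have hre : ∑ x : Fin p, (Nat.choose x.val t : ZMod p) * w (x - 1)
      = ∑ y : Fin p, (Nat.choose ((y + 1 : Fin p)).val t : ZMod p) * w y := by
    apply Fintype.sum_equiv (Equiv.subRight (1 : Fin p))
    intro x
    simp only [Equiv.subRight_apply]
    rw [sub_add_cancel]
  rw [hre, ← Finset.sum_add_distrib]
  apply Finset.sum_congr rfl
  intro y _
  rw [← add_mul]
  congr 1
  obtain ⟨q, hq⟩ : ∃ q, p = q + 1 := ⟨p - 1, (Nat.succ_pred_eq_of_pos (NeZero.pos p)).symm⟩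
  subst hq
  obtain ⟨t', rfl⟩ : ∃ t', t = t' + 1 := ⟨t - 1, (Nat.succ_pred_eq_of_pos ht1).symm⟩
  rw [Fin.val_add_one]
  by_cases hl : y = Fin.last q
  · rw [if_pos hl, hl, Fin.val_last]
    show ((Nat.choose 0 (t' + 1) : ℕ) : ZMod (q + 1)) = _
    rw [Nat.choose_eq_zero_of_lt (Nat.succ_pos t'), Nat.cast_zero]
    have hdvd : (q + 1) ∣ (q + 1).choose (t' + 1) :=
      hp.dvd_choose_self (Nat.succ_ne_zero t') htp
    have hz : (((q + 1).choose (t' + 1) : ℕ) : ZMod (q + 1)) = 0 :=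
      (ZMod.natCast_eq_zero_iff _ _).mpr hdvd
    rw [Nat.choose_succ_succ, Nat.cast_add] at hz
    have ht'' : (t' + 1) - 1 = t' := rfl
    rw [ht'']
    linear_combination -hz
  · rw [if_neg hl, Nat.choose_succ_succ, Nat.cast_add]
    have ht'' : (t' + 1) - 1 = t' := rfl
    rw [ht'']
    ring

theorem shiftF_one_phi [Fact p.Prime] {k : ℕ} (hk : k < p) {v : Fin p → ZMod p}
    (hv : ∀ t < k, phi t v = 0) :
    ∀ t ≤ k, phi t (shiftF 1 v) = phi t v := by
  intro t
  induction t using Nat.strong_induction_on with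
  | _ t ih =>
    intro htk
    have hS : (fun x => (shiftF 1 v) (x - 1)) = v := by
      funext x
      show v (x - 1 + 1) = v x
      rw [sub_add_cancel]
    rcases Nat.eq_zero_or_pos t with h0 | h1
    · subst h0
      unfold phi
      apply Fintype.sum_equiv (Equiv.addRight (1 : Fin p))
      intro x
      simp only [Equiv.coe_addRight, Nat.choose_zero_right, Nat.cast_one, one_mul]
      rfl
    · have hrec := phi_S (p := p) h1 (lt_of_le_of_lt htk hk) (shiftF 1 v)
      rw [hS] at hrec
      have hlow : phi (t - 1) (shiftF 1 v) = phi (t - 1) v :=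
        ih (t - 1) (by omega) (by omega)
      have hzero : phi (t - 1) v = 0 := hv (t - 1) (by omega)
      rw [hlow, hzero, add_zero] at hrec
      exact hrec.symm

/-- shift preservation for all shifts -/
theorem shiftF_phi [Fact p.Prime] {k : ℕ} (hk : k < p) {v : Fin p → ZMod p}
    (hv : ∀ t < k, phi t v = 0) (d : Fin p) :
    (∀ t < k, phi t (shiftF d v) = 0) ∧ phi k (shiftF d v) = phi k v := by
  suffices h : ∀ m : ℕ, ∀ v : Fin p → ZMod p, (∀ t < k, phi t v = 0) →
      (∀ t < k, phi t (shiftF (m : Fin p) v) = 0) ∧ phi k (shiftF (m : Fin p) v) = phi k v by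
    have := h d.val v hv
    rwa [Fin.cast_val_eq_self] at this
  intro m
  induction m with
  | zero =>
    intro v hv
    rw [Nat.cast_zero, shiftF_zero]
    exact ⟨hv, rfl⟩
  | succ m ihm =>
    intro v hv
    have h1 : (∀ t < k, phi t (shiftF 1 v) = 0) ∧ phi k (shiftF 1 v) = phi k v := by
      constructor
      · intro t ht
        rw [shiftF_one_phi hk hv t (le_of_lt ht)]
        exact hv t ht
      · exact shiftF_one_phi hk hv k le_rfl
    have hm := ihm (shiftF 1 v) h1.1
    have hcast : ((m + 1 : ℕ) : Fin p) = (m : Fin p) + 1 := by push_cast; ring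
    rw [hcast, ← shiftF_add]
    exact ⟨hm.1, by rw [hm.2, h1.2]⟩

end EGSAux
namespace EGSAux

open TreeAut

variable {p : ℕ} [NeZero p]

theorem root_triv_of_act {g : TreeAut p} (h : ∀ x : Fin p, g.act [x] = [x]) :
    g.perm [] = 1 := by
  apply Equiv.ext
  intro x
  have hx := h x
  rw [act_single_s3] at hx
  simp only [Equiv.Perm.one_apply]
  exact ((List.cons.injEq _ _ _ _).mp hx).1

theorem entry_of_rot_pow (u : ZMod p) : iz ((rot p ^ u.val).perm [] 0) = u := by
  rw [rot_pow, rotF_perm_nil]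
  show iz ((0 : Fin p) + ((u.val : ℕ) : Fin p)) = u
  rw [zero_add, iz_natCast]
  exact ZMod.natCast_rightInverse u

theorem rot_pow_perm_nil (n : ℕ) : (rot p ^ n).perm [] = Equiv.addRight ((n : Fin p)) := by
  rw [rot_pow, rotF_perm_nil]

theorem rot_pow_sect (n : ℕ) (x : Fin p) : (rot p ^ n).sect x = 1 := by
  rw [rot_pow, rotF_sect]

/-- the Good predicate: level-≤1 rotational, with `vec` in the filtration level `k`. -/
def Good (k : ℕ) (g : TreeAut p) : Prop :=
  IsRot (g.perm []) ∧ (∀ x, IsRot ((g.sect x).perm [])) ∧ ∀ t < k, phi t (vec g) = 0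

theorem good_one (k : ℕ) : Good k (1 : TreeAut p) := by
  refine ⟨by rw [perm_one]; exact isRot_one, fun x => by rw [sect_one, perm_one]; exact isRot_one, ?_⟩
  intro t _
  have hv : vec (1 : TreeAut p) = 0 := by
    funext x
    show iz (((1 : TreeAut p).sect x).perm [] 0) = 0
    rw [sect_one, perm_one]
    exact iz_zero
  rw [hv, phi_zero]

theorem vec_mul {g h : TreeAut p} (hg : IsRot (g.perm [])) (hh : ∀ x, IsRot ((h.sect x).perm [])) :
    vec (g * h) = vec g + shiftF (g.perm [] 0) (vec h) := by
  funext x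
  show iz (((g * h).sect x).perm [] 0) = vec g x + vec h (x + g.perm [] 0)
  rw [sect_mul, perm_mul_nil, Equiv.trans_apply]
  rw [hh (g.perm [] x) ((g.sect x).perm [] 0), iz_add]
  rw [hg x]
  rfl

theorem vec_inv {g : TreeAut p} (hg : IsRot (g.perm [])) (hgs : ∀ x, IsRot ((g.sect x).perm [])) :
    vec g⁻¹ = -(shiftF (-(g.perm [] 0)) (vec g)) := by
  funext x
  show iz (((g⁻¹).sect x).perm [] 0) = -(vec g (x + -(g.perm [] 0)))
  rw [sect_inv, perm_inv_nil, isRot_symm_apply (hgs _) 0, zero_sub, iz_neg]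
  rw [isRot_symm_apply hg x, sub_eq_add_neg]
  rfl

theorem good_mul [Fact p.Prime] {k : ℕ} (hk : k < p) {g h : TreeAut p}
    (Hg : Good k g) (Hh : Good k h) : Good k (g * h) := by
  obtain ⟨hg1, hg2, hg3⟩ := Hg
  obtain ⟨hh1, hh2, hh3⟩ := Hh
  refine ⟨?_, ?_, ?_⟩
  · rw [perm_mul_nil]
    exact isRot_trans hg1 hh1
  · intro x
    rw [sect_mul, perm_mul_nil]
    exact isRot_trans (hg2 x) (hh2 _)
  · intro t ht
    rw [vec_mul hg1 hh2, phi_add]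
    rw [hg3 t ht, (shiftF_phi hk hh3 _).1 t ht, add_zero]

theorem good_inv [Fact p.Prime] {k : ℕ} (hk : k < p) {g : TreeAut p}
    (Hg : Good k g) : Good k g⁻¹ := by
  obtain ⟨hg1, hg2, hg3⟩ := Hg
  refine ⟨?_, ?_, ?_⟩
  · rw [perm_inv_nil]
    exact isRot_symm hg1
  · intro x
    rw [sect_inv, perm_inv_nil]
    exact isRot_symm (hg2 _)
  · intro t ht
    rw [vec_inv hg1 hg2, phi_neg, (shiftF_phi hk hg3 _).1 t ht, neg_zero]

section Datum

variable {e : Fin (p - 1) → ZMod p} {b c : TreeAut p} (hd : IsEGSDatum p e b c)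

theorem b_root (hd : IsEGSDatum p e b c) : b.perm [] = 1 := root_triv_of_act hd.2.1

theorem c_root (hd : IsEGSDatum p e b c) : c.perm [] = 1 := root_triv_of_act hd.2.2.2.2.1

theorem b_sect_cases (hd : IsEGSDatum p e b c) (y : Fin p) :
    (y.val = p - 1 ∧ b.sect y = b) ∨
      ∃ n : Fin (p - 1), y.val = n.val ∧ b.sect y = rot p ^ (e n).val := by
  have hyp := y.isLt
  by_cases hy : y.val = p - 1
  · left
    refine ⟨hy, ?_⟩
    have hcast : ((p - 1 : ℕ) : Fin p) = y := by
      apply Fin.ext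
      rw [Fin.val_natCast, Nat.mod_eq_of_lt (by omega), hy]
    have key := hd.2.2.1
    rwa [hcast] at key
  · right
    refine ⟨⟨y.val, by omega⟩, rfl, ?_⟩
    have key := hd.2.2.2.1 ⟨y.val, by omega⟩
    rwa [Fin.cast_val_eq_self y] at key

theorem c_sect_cases (hd : IsEGSDatum p e b c) (y : Fin p) :
    (y = 0 ∧ c.sect y = c) ∨
      ∃ n : Fin (p - 1), y.val = n.val + 1 ∧ c.sect y = rot p ^ (e n).val := by
  have hyp := y.isLt
  have hp1 : 1 ≤ p := NeZero.pos p
  by_cases hy : y = 0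
  · left
    exact ⟨hy, by rw [hy]; exact hd.2.2.2.2.2.1⟩
  · right
    have hyv : y.val ≠ 0 := fun h => hy (Fin.ext h)
    refine ⟨⟨y.val - 1, by omega⟩, (by show y.val = y.val - 1 + 1; omega), ?_⟩
    have key := hd.2.2.2.2.2.2 ⟨y.val - 1, by omega⟩
    have hcast : ((y.val - 1 + 1 : ℕ) : Fin p) = y := by
      have h2 : y.val - 1 + 1 = y.val := by omega
      rw [h2, Fin.cast_val_eq_self]
    rwa [hcast] at key

theorem good_rot (k : ℕ) : Good k (rot p) := by
  refine ⟨?_, ?_, ?_⟩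
  · rw [rot_eq_rotF, rotF_perm_nil]
    exact isRot_addRight 1
  · intro x
    rw [rot_eq_rotF, rotF_sect, perm_one]
    exact isRot_one
  · intro t _
    have hv : vec (rot p) = 0 := by
      funext x
      show iz (((rot p).sect x).perm [] 0) = 0
      rw [rot_eq_rotF, rotF_sect, perm_one]
      exact iz_zero
    rw [hv, phi_zero]

theorem b_sect_isRot (hd : IsEGSDatum p e b c) (x : Fin p) : IsRot ((b.sect x).perm []) := by
  rcases b_sect_cases hd x with ⟨_, h⟩ | ⟨n, _, h⟩
  · rw [h, b_root hd]
    exact isRot_one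
  · rw [h, rot_pow_perm_nil]
    exact isRot_addRight _

theorem c_sect_isRot (hd : IsEGSDatum p e b c) (x : Fin p) : IsRot ((c.sect x).perm []) := by
  rcases c_sect_cases hd x with ⟨_, h⟩ | ⟨n, _, h⟩
  · rw [h, c_root hd]
    exact isRot_one
  · rw [h, rot_pow_perm_nil]
    exact isRot_addRight _

theorem vec_c_eq (hd : IsEGSDatum p e b c) (hp3 : 3 ≤ p) :
    vec c = shiftF (-1) (vec b) := by
  funext x
  show iz ((c.sect x).perm [] 0) = vec b (x + -1)
  have h1v : (1 : Fin p).val = 1 := by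
    rw [Fin.val_one', Nat.mod_eq_of_lt (by omega)]
  have hneg : ((-1 : Fin p)).val = p - 1 := by
    have h0 : (-1 : Fin p) = 0 - 1 := by ring
    rw [h0, Fin.sub_def]
    show (p - (1 : Fin p).val + (0 : Fin p).val) % p = p - 1
    rw [h1v, Fin.val_zero, Nat.add_zero, Nat.mod_eq_of_lt (by omega)]
  rcases c_sect_cases hd x with ⟨hx0, h⟩ | ⟨n, hxv, h⟩
  · subst hx0
    rw [h, c_root hd]
    have : (0 : Fin p) + -1 = -1 := by ring
    rw [this]
    rcases b_sect_cases hd (-1) with ⟨_, hb⟩ | ⟨m, hm, _⟩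
    · show iz _ = iz ((b.sect (-1)).perm [] 0)
      rw [hb, b_root hd]
    · exfalso
      have := m.isLt
      omega
  · rw [h]
    have hx1 : (x + -1).val = n.val := by
      have hxne : x.val ≠ 0 := by omega
      have hxlt := x.isLt
      have hn := n.isLt
      have h0 : x + -1 = x - 1 := by ring
      rw [h0, Fin.sub_def]
      show (p - (1 : Fin p).val + x.val) % p = n.val
      rw [h1v]
      have h2 : p - 1 + x.val = p + (x.val - 1) := by omega
      rw [h2, Nat.add_mod_left, Nat.mod_eq_of_lt (by omega)]
      omega
    rcases b_sect_cases hd (x + -1) with ⟨hb1, _⟩ | ⟨m, hm, hb⟩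
    · exfalso
      have := n.isLt
      omega
    · have hmn : m = n := by
        apply Fin.ext
        omega
      show iz ((rot p ^ (e n).val).perm [] 0) = iz ((b.sect (x + -1)).perm [] 0)
      rw [hb, hmn]

theorem good_b (hd : IsEGSDatum p e b c) {k : ℕ} (hkb : ∀ t < k, phi t (vec b) = 0) :
    Good k b :=
  ⟨by rw [b_root hd]; exact isRot_one, b_sect_isRot hd, hkb⟩

theorem good_c [Fact p.Prime] (hd : IsEGSDatum p e b c) (hp3 : 3 ≤ p) {k : ℕ} (hk : k < p)
    (hkb : ∀ t < k, phi t (vec b) = 0) : Good k c := by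
  refine ⟨by rw [c_root hd]; exact isRot_one, c_sect_isRot hd, ?_⟩
  intro t ht
  rw [vec_c_eq hd hp3]
  exact (shiftF_phi hk hkb _).1 t ht

theorem good_of_mem [Fact p.Prime] (hd : IsEGSDatum p e b c) (hp3 : 3 ≤ p) {k : ℕ} (hk : k < p)
    (hkb : ∀ t < k, phi t (vec b) = 0) :
    ∀ g ∈ EGSGroup p b c, Good k g := by
  intro g hg
  induction hg using Subgroup.closure_induction with
  | mem x hx =>
    rcases hx with h | h | h
    · rw [h]; exact good_rot k
    · rw [h]; exact good_b hd hkb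
    · rw [h]; exact good_c hd hp3 hk hkb
  | one => exact good_one k
  | mul x y hx hy ihx ihy => exact good_mul hk ihx ihy
  | inv x hx ihx => exact good_inv hk ihx

end Datum

end EGSAux
namespace EGSAux

open TreeAut

variable {p : ℕ} [NeZero p]

/-- conjugate of `b` by a rotation -/
def conj3 (d : Fin p) (b : TreeAut p) : TreeAut p := rotF d * b * rotF (-d)

theorem conj3_root {b : TreeAut p} (hb : b.perm [] = 1) (d : Fin p) :
    (conj3 d b).perm [] = 1 := by
  unfold conj3
  rw [perm_mul_nil, perm_mul_nil, rotF_perm_nil, rotF_perm_nil, hb]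
  ext x
  simp

theorem conj3_sect {b : TreeAut p} (hb : b.perm [] = 1) (d x : Fin p) :
    (conj3 d b).sect x = b.sect (x + d) := by
  unfold conj3
  rw [sect_mul, sect_mul, rotF_sect, rotF_sect, one_mul, mul_one, rotF_perm_nil]
  congr 1

theorem neg_one_val (hp3 : 3 ≤ p) : ((-1 : Fin p)).val = p - 1 := by
  have h1v : (1 : Fin p).val = 1 := by
    rw [Fin.val_one', Nat.mod_eq_of_lt (by omega)]
  have h0 : (-1 : Fin p) = 0 - 1 := by ring
  rw [h0, Fin.sub_def]
  show (p - (1 : Fin p).val + (0 : Fin p).val) % p = p - 1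
  rw [h1v, Fin.val_zero, Nat.add_zero, Nat.mod_eq_of_lt (by omega)]

theorem val_add_neg_one (hp3 : 3 ≤ p) {x : Fin p} (hx : x ≠ 0) :
    (x + -1).val = x.val - 1 := by
  have h1v : (1 : Fin p).val = 1 := by
    rw [Fin.val_one', Nat.mod_eq_of_lt (by omega)]
  have hxne : x.val ≠ 0 := fun h => hx (Fin.ext h)
  have hxlt := x.isLt
  have h0 : x + -1 = x - 1 := by ring
  rw [h0, Fin.sub_def]
  show (p - (1 : Fin p).val + x.val) % p = x.val - 1
  rw [h1v]
  have h2 : p - 1 + x.val = p + (x.val - 1) := by omega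
  rw [h2, Nat.add_mod_left, Nat.mod_eq_of_lt (by omega)]

section Datum

variable {e : Fin (p - 1) → ZMod p} {b c : TreeAut p}

theorem b_sect_neg_one (hd : IsEGSDatum p e b c) (hp3 : 3 ≤ p) : b.sect (-1 : Fin p) = b := by
  rcases b_sect_cases hd (-1) with ⟨_, h⟩ | ⟨n, hn, _⟩
  · exact h
  · exfalso
    have := n.isLt
    have := neg_one_val (p := p) hp3
    omega

theorem b_pow_p (hd : IsEGSDatum p e b c) : b ^ p = 1 := by
  apply eq_one_of_recursive ((p - 1 : ℕ) : Fin p) (rt_pow (b_root hd) p)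
  · intro x hx
    rw [sect_pow_rt (b_root hd)]
    have hxval : x.val ≠ p - 1 := by
      intro h
      apply hx
      apply Fin.ext
      rw [Fin.val_natCast, Nat.mod_eq_of_lt (by have := NeZero.pos p; omega), h]
    rcases b_sect_cases hd x with ⟨h1, _⟩ | ⟨n, _, h2⟩
    · exact absurd h1 hxval
    · rw [h2, pow_right_comm, rot_pow_p, one_pow]
  · rw [sect_pow_rt (b_root hd), hd.2.2.1]

/-- the two correction elements -/
def DAe (b : TreeAut p) (j' m : ℕ) : TreeAut p :=
  (emb (rot p))⁻¹ * (conj3 ((j' : Fin p)) b) ^ m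

def DBe (b : TreeAut p) : TreeAut p := (emb b)⁻¹ * conj3 (-1) b

variable {j : Fin (p - 1)}

theorem jval (hp3 : 3 ≤ p) (j : Fin (p - 1)) : ((j.val : ℕ) : Fin p).val = j.val := by
  have := j.isLt
  rw [Fin.val_natCast, Nat.mod_eq_of_lt (by omega)]

theorem DA_root (hd : IsEGSDatum p e b c) (j' m : ℕ) : (DAe b j' m).perm [] = 1 :=
  rt_mul (rt_inv (emb_perm_nil _)) (rt_pow (conj3_root (b_root hd) _) m)

theorem DB_root (hd : IsEGSDatum p e b c) : (DBe b).perm [] = 1 :=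
  rt_mul (rt_inv (emb_perm_nil _)) (conj3_root (b_root hd) _)

theorem DA_sect_ne (hd : IsEGSDatum p e b c) (j' m : ℕ) {x : Fin p} (hx : x ≠ 0) :
    (DAe b j' m).sect x = (b.sect (x + (j' : Fin p))) ^ m := by
  unfold DAe
  rw [sect_mul_rt (rt_inv (emb_perm_nil _)), sect_inv_rt (emb_perm_nil _),
    emb_sect_ne _ _ hx, inv_one, one_mul, sect_pow_rt (conj3_root (b_root hd) _),
    conj3_sect (b_root hd)]

theorem DA_sect_zero (hd : IsEGSDatum p e b c) (hp3 : 3 ≤ p) [Fact p.Prime]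
    (hj : e j ≠ 0) :
    (DAe b j.val ((e j)⁻¹).val).sect 0 = 1 := by
  haveI : Fact (1 < p) := ⟨by omega⟩
  unfold DAe
  rw [sect_mul_rt (rt_inv (emb_perm_nil _)), sect_inv_rt (emb_perm_nil _), emb_sect_zero,
    sect_pow_rt (conj3_root (b_root hd) _), conj3_sect (b_root hd), zero_add,
    hd.2.2.2.1 j, ← pow_mul, rot_pow_mod]
  have hval : (e j).val * ((e j)⁻¹).val % p = 1 := by
    rw [← ZMod.val_mul, mul_inv_cancel₀ hj, ZMod.val_one]
  rw [hval, pow_one, inv_mul_cancel]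

theorem DB_sect_ne (hd : IsEGSDatum p e b c) {x : Fin p} (hx : x ≠ 0) :
    (DBe b).sect x = b.sect (x + -1) := by
  unfold DBe
  rw [sect_mul_rt (rt_inv (emb_perm_nil _)), sect_inv_rt (emb_perm_nil _),
    emb_sect_ne _ _ hx, inv_one, one_mul, conj3_sect (b_root hd)]

theorem DB_sect_zero (hd : IsEGSDatum p e b c) (hp3 : 3 ≤ p) : (DBe b).sect 0 = 1 := by
  unfold DBe
  rw [sect_mul_rt (rt_inv (emb_perm_nil _)), sect_inv_rt (emb_perm_nil _), emb_sect_zero,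
    conj3_sect (b_root hd), zero_add, b_sect_neg_one hd hp3, inv_mul_cancel]

theorem DB_sect_rot (hd : IsEGSDatum p e b c) (hp3 : 3 ≤ p) {x : Fin p} (hx : x ≠ 0) :
    ∃ n : Fin (p - 1), (DBe b).sect x = rot p ^ (e n).val ∧ n.val = x.val - 1 := by
  rw [DB_sect_ne hd hx]
  rcases b_sect_cases hd (x + -1) with ⟨h1, _⟩ | ⟨n, hn, h2⟩
  · exfalso
    rw [val_add_neg_one hp3 hx] at h1
    have := x.isLt
    have hxne : x.val ≠ 0 := fun h => hx (Fin.ext h)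
    omega
  · exact ⟨n, h2, by rw [← hn, val_add_neg_one hp3 hx]⟩

theorem val_sum_of_last (hp3 : 3 ≤ p) {x : Fin p}
    (h : (x + ((j.val : ℕ) : Fin p)).val = p - 1) : x.val + j.val = p - 1 := by
  rw [Fin.add_def] at h
  have h2 : (x.val + ((j.val : ℕ) : Fin p).val) % p = p - 1 := h
  have hj' := jval hp3 j
  have hjlt := j.isLt
  have hxlt := x.isLt
  rw [hj'] at h2
  rcases Nat.lt_or_ge (x.val + j.val) p with hlt | hge
  · rw [Nat.mod_eq_of_lt hlt] at h2
    omega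
  · exfalso
    rw [Nat.mod_eq_sub_mod hge, Nat.mod_eq_of_lt (by omega)] at h2
    omega

theorem DB_sect_special (hd : IsEGSDatum p e b c) (hp3 : 3 ≤ p)
    (hpj : vcomp e (p - (j.val + 1)) = 0) {x : Fin p}
    (hx : x ≠ 0) (hlast : (x + ((j.val : ℕ) : Fin p)).val = p - 1) :
    (DBe b).sect x = 1 := by
  obtain ⟨n, hn, hnval⟩ := DB_sect_rot hd hp3 hx
  have hsum := val_sum_of_last hp3 hlast
  have hjlt := j.isLt
  have hxlt := x.isLt
  have hxne : x.val ≠ 0 := fun h => hx (Fin.ext h)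
  have hen : e n = 0 := by
    have hnv : n.val = p - (j.val + 1) - 1 := by omega
    have hmod : (p - (j.val + 1)) % p = p - (j.val + 1) := Nat.mod_eq_of_lt (by omega)
    rw [vcomp, dif_neg (by omega)] at hpj
    have : n = ⟨(p - (j.val + 1)) % p - 1, by omega⟩ := by
      apply Fin.ext
      simp only [hmod]
      omega
    rw [this]
    exact hpj
  rw [hn, hen, ZMod.val_zero, pow_zero]

theorem commute_DA_DB (hd : IsEGSDatum p e b c) (hp3 : 3 ≤ p) [Fact p.Prime]
    (hj : e j ≠ 0) (hpj : vcomp e (p - (j.val + 1)) = 0) :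
    Commute (DAe b j.val ((e j)⁻¹).val) (DBe b) := by
  apply commute_of_sect (DA_root hd _ _) (DB_root hd)
  intro x
  by_cases hx : x = 0
  · subst hx
    rw [DA_sect_zero hd hp3 hj]
    exact Commute.one_left _
  · rw [DA_sect_ne hd _ _ hx]
    rcases b_sect_cases hd (x + ((j.val : ℕ) : Fin p)) with ⟨h1, h2⟩ | ⟨n, _, h2⟩
    · rw [DB_sect_special hd hp3 hpj hx h1]
      exact Commute.one_right _
    · obtain ⟨n', hn', _⟩ := DB_sect_rot hd hp3 hx
      rw [h2, hn']
      exact ((Commute.refl (rot p)).pow_pow _ _).pow_left _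

theorem DA_pow_p (hd : IsEGSDatum p e b c) (hp3 : 3 ≤ p) [Fact p.Prime] (hj : e j ≠ 0) :
    (DAe b j.val ((e j)⁻¹).val) ^ p = 1 := by
  apply eq_of_root_sect
  · rw [rt_pow (DA_root hd _ _), perm_one]
  · intro x
    rw [sect_pow_rt (DA_root hd _ _), sect_one]
    by_cases hx : x = 0
    · rw [hx, DA_sect_zero hd hp3 hj, one_pow]
    · rw [DA_sect_ne hd _ _ hx]
      rcases b_sect_cases hd (x + ((j.val : ℕ) : Fin p)) with ⟨_, h2⟩ | ⟨n, _, h2⟩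
      · rw [h2, ← pow_mul, Nat.mul_comm, pow_mul, b_pow_p hd, one_pow]
      · rw [h2, ← pow_mul, ← pow_mul,
          show (e n).val * (((e j)⁻¹).val * p) = p * ((e n).val * ((e j)⁻¹).val) by ring,
          pow_mul, rot_pow_p, one_pow]

theorem DB_pow_p (hd : IsEGSDatum p e b c) (hp3 : 3 ≤ p) : (DBe b) ^ p = 1 := by
  apply eq_of_root_sect
  · rw [rt_pow (DB_root hd), perm_one]
  · intro x
    rw [sect_pow_rt (DB_root hd), sect_one]
    by_cases hx : x = 0
    · rw [hx, DB_sect_zero hd hp3, one_pow]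
    · obtain ⟨n, hn, _⟩ := DB_sect_rot hd hp3 hx
      rw [hn, pow_right_comm, rot_pow_p, one_pow]

/-- the identity giving `σ(c) = c`. -/
theorem emb_DB_c (hd : IsEGSDatum p e b c) (hp3 : 3 ≤ p) : emb c * DBe b = c := by
  apply eq_of_root_sect
  · rw [rt_mul (emb_perm_nil _) (DB_root hd), c_root hd]
  · intro x
    rw [sect_mul_rt (emb_perm_nil _)]
    by_cases hx : x = 0
    · subst hx
      rw [emb_sect_zero, DB_sect_zero hd hp3, mul_one, hd.2.2.2.2.2.1]
    · rw [emb_sect_ne _ _ hx, one_mul]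
      obtain ⟨n, hn, hnval⟩ := DB_sect_rot hd hp3 hx
      rcases c_sect_cases hd x with ⟨h1, _⟩ | ⟨n', hn', h2⟩
      · exact absurd h1 hx
      · rw [hn, h2]
        have : n = n' := by
          apply Fin.ext
          omega
        rw [this]

end Datum

end EGSAux
namespace EGSAux

open TreeAut

variable {p : ℕ} [NeZero p]

section Datum

variable {e : Fin (p - 1) → ZMod p} {b c : TreeAut p} {j : Fin (p - 1)} {k : ℕ}

/-- The lifting map. -/
def sigmaFun (e : Fin (p - 1) → ZMod p) (b : TreeAut p) (j : Fin (p - 1)) (k : ℕ)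
    (x : TreeAut p) : TreeAut p :=
  emb x * (DAe b j.val ((e j)⁻¹).val ^ (iz (x.perm [] 0)).val *
    DBe b ^ (phi k (vec x) * (phi k (vec b))⁻¹).val)

theorem sigmaFun_root (hd : IsEGSDatum p e b c) (x : TreeAut p) :
    (sigmaFun e b j k x).perm [] = 1 :=
  rt_mul (emb_perm_nil _)
    (rt_mul (rt_pow (DA_root hd _ _) _) (rt_pow (DB_root hd) _))

theorem sigmaFun_sect0 (hd : IsEGSDatum p e b c) (hp3 : 3 ≤ p) [Fact p.Prime]
    (hj : e j ≠ 0) (x : TreeAut p) :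
    (sigmaFun e b j k x).sect 0 = x := by
  unfold sigmaFun
  rw [sect_mul_rt (emb_perm_nil _), emb_sect_zero,
    sect_mul_rt (rt_pow (DA_root hd _ _) _), sect_pow_rt (DA_root hd _ _),
    sect_pow_rt (DB_root hd), DA_sect_zero hd hp3 hj, DB_sect_zero hd hp3,
    one_pow, one_pow, mul_one, mul_one]

theorem vec_one : vec (1 : TreeAut p) = 0 := by
  funext x
  show iz (((1 : TreeAut p).sect x).perm [] 0) = 0
  rw [sect_one, perm_one]
  exact iz_zero

theorem vec_rot : vec (rot p) = 0 := by
  funext x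
  show iz (((rot p).sect x).perm [] 0) = 0
  rw [rot_eq_rotF, rotF_sect, perm_one]
  exact iz_zero

theorem sigmaFun_one : sigmaFun e b j k (1 : TreeAut p) = 1 := by
  unfold sigmaFun
  rw [perm_one, Equiv.Perm.one_apply, iz_zero, ZMod.val_zero, pow_zero,
    vec_one, phi_zero, zero_mul, ZMod.val_zero, pow_zero, one_mul, emb_one, one_mul]

theorem sigmaFun_mul (hd : IsEGSDatum p e b c) (hp3 : 3 ≤ p) [Fact p.Prime]
    (hj : e j ≠ 0) (hpj : vcomp e (p - (j.val + 1)) = 0) (hk : k < p)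
    {x y : TreeAut p} (Hx : Good k x) (Hy : Good k y) :
    sigmaFun e b j k (x * y) = sigmaFun e b j k x * sigmaFun e b j k y := by
  obtain ⟨hx1, hx2, hx3⟩ := Hx
  obtain ⟨hy1, hy2, hy3⟩ := Hy
  have hDAp := DA_pow_p hd hp3 hj
  have hDBp := DB_pow_p hd hp3
  have hlam : iz ((x * y).perm [] 0) = iz (x.perm [] 0) + iz (y.perm [] 0) := by
    rw [perm_nil_mul_apply, hy1 (x.perm [] 0), iz_add]
  have hpsi : phi k (vec (x * y)) = phi k (vec x) + phi k (vec y) := by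
    rw [vec_mul hx1 hy2, phi_add, (shiftF_phi hk hy3 _).2]
  have hA : DAe b j.val ((e j)⁻¹).val ^ (iz ((x * y).perm [] 0)).val =
      DAe b j.val ((e j)⁻¹).val ^ (iz (x.perm [] 0)).val *
        DAe b j.val ((e j)⁻¹).val ^ (iz (y.perm [] 0)).val := by
    rw [hlam, ZMod.val_add, ← pow_eq_pow_mod _ hDAp, pow_add]
  have hB : DBe b ^ (phi k (vec (x * y)) * (phi k (vec b))⁻¹).val =
      DBe b ^ (phi k (vec x) * (phi k (vec b))⁻¹).val *
        DBe b ^ (phi k (vec y) * (phi k (vec b))⁻¹).val := by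
    rw [hpsi, add_mul, ZMod.val_add, ← pow_eq_pow_mod _ hDBp, pow_add]
  unfold sigmaFun
  rw [emb_mul, hA, hB]
  have hQR : Commute (DAe b j.val ((e j)⁻¹).val ^ (iz (y.perm [] 0)).val)
      (DBe b ^ (phi k (vec x) * (phi k (vec b))⁻¹).val) :=
    (commute_DA_DB hd hp3 hj hpj).pow_pow _ _
  have hPRE2 : Commute
      (DAe b j.val ((e j)⁻¹).val ^ (iz (x.perm [] 0)).val *
        DBe b ^ (phi k (vec x) * (phi k (vec b))⁻¹).val) (emb y) := by
    apply Commute.symm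
    exact Commute.mul_right
      ((emb_commute y (DA_root hd _ _) (DA_sect_zero hd hp3 hj)).pow_right _)
      ((emb_commute y (DB_root hd) (DB_sect_zero hd hp3)).pow_right _)
  rw [hPRE2.mul_mul_mul_comm (emb x), hQR.mul_mul_mul_comm]

theorem conj3_eq_zpow (hp3 : 3 ≤ p) (b : TreeAut p) (j : Fin (p - 1)) :
    ((rot p ^ ((1 : ℤ) - (j.val + 1)))⁻¹ * b * rot p ^ ((1 : ℤ) - (j.val + 1))) =
      conj3 ((j.val : ℕ) : Fin p) b := by
  have hz : ((1 : ℤ) - (j.val + 1)) = -(j.val : ℤ) := by push_cast; ring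
  have hw : rot p ^ ((1 : ℤ) - (j.val + 1)) = rotF (-((j.val : ℕ) : Fin p)) := by
    rw [hz, zpow_neg, zpow_natCast, rot_pow, rotF_inv]
  rw [hw, rotF_inv, neg_neg]
  rfl

theorem conj3_neg_one_eq (b : TreeAut p) :
    conj3 (-1 : Fin p) b = (rot p)⁻¹ * b * rot p := by
  unfold conj3
  rw [neg_neg, rot_eq_rotF, rotF_inv]

theorem sigmaFun_rot (hd : IsEGSDatum p e b c) (hp3 : 3 ≤ p) :
    sigmaFun e b j k (rot p) =
      (conj3 ((j.val : ℕ) : Fin p) b) ^ ((e j)⁻¹).val := by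
  haveI : Fact (1 < p) := ⟨by omega⟩
  unfold sigmaFun
  have h1 : (rot p).perm [] 0 = (1 : Fin p) := by
    rw [rot_eq_rotF, rotF_perm_nil]
    show (0 : Fin p) + 1 = 1
    rw [zero_add]
  have h1v : (1 : Fin p).val = 1 := by
    rw [Fin.val_one', Nat.mod_eq_of_lt (by omega)]
  have hiz : (iz ((rot p).perm [] 0)).val = 1 := by
    rw [h1]
    show (((1 : Fin p).val : ℕ) : ZMod p).val = 1
    rw [h1v, Nat.cast_one, ZMod.val_one]
  rw [hiz, vec_rot, phi_zero, zero_mul, ZMod.val_zero, pow_zero, mul_one, pow_one]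
  unfold DAe
  exact mul_inv_cancel_left _ _

theorem sigmaFun_b (hd : IsEGSDatum p e b c) (hp3 : 3 ≤ p) [Fact p.Prime]
    (hμ : phi k (vec b) ≠ 0) :
    sigmaFun e b j k b = conj3 (-1 : Fin p) b := by
  haveI : Fact (1 < p) := ⟨by omega⟩
  unfold sigmaFun
  have h0 : (iz (b.perm [] 0)).val = 0 := by
    rw [b_root hd, Equiv.Perm.one_apply, iz_zero, ZMod.val_zero]
  have h1 : (phi k (vec b) * (phi k (vec b))⁻¹).val = 1 := by
    rw [mul_inv_cancel₀ hμ, ZMod.val_one]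
  rw [h0, h1, pow_zero, one_mul, pow_one]
  unfold DBe
  exact mul_inv_cancel_left _ _

theorem sigmaFun_c (hd : IsEGSDatum p e b c) (hp3 : 3 ≤ p) [Fact p.Prime]
    (hk : k < p) (hlow : ∀ t < k, phi t (vec b) = 0) (hμ : phi k (vec b) ≠ 0) :
    sigmaFun e b j k c = c := by
  haveI : Fact (1 < p) := ⟨by omega⟩
  unfold sigmaFun
  have h0 : (iz (c.perm [] 0)).val = 0 := by
    rw [c_root hd, Equiv.Perm.one_apply, iz_zero, ZMod.val_zero]
  have h1 : (phi k (vec c) * (phi k (vec b))⁻¹).val = 1 := by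
    rw [vec_c_eq hd hp3, (shiftF_phi hk hlow _).2, mul_inv_cancel₀ hμ, ZMod.val_one]
  rw [h0, h1, pow_zero, one_mul, pow_one]
  exact emb_DB_c hd hp3

end Datum

end EGSAux
open EGSAux TreeAut in
/-- **Liftability of EGS-groups.** Let `p ≥ 3` be a prime and `G_e = ⟨a,b,c⟩` the
EGS-group defined by a non-zero vector `e ∈ (ℤ/pℤ)^{p-1}`. If there is
`j ∈ {1,…,p-1}` with `e_j ≠ 0` and `e_{p-j} = 0`, then `G_e` is liftable: the
assignment `σ(a) = (b^{a^{1-j}})^{(e_j)⁻¹}`, `σ(b) = b^a`, `σ(c) = c` extends to a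
homomorphism `σ : G_e → St_{G_e}(0)` with `π₀ ∘ σ = id`.
(Lean's `j : Fin (p-1)` is the paper's `j = j.val + 1`; `g^h = h⁻¹gh`.) -/
theorem EGS_liftable (p : ℕ) [Fact p.Prime] [NeZero p] (hp3 : 3 ≤ p)
    (e : Fin (p - 1) → ZMod p) (b c : TreeAut p)
    (hdatum : IsEGSDatum p e b c)
    (j : Fin (p - 1))
    (hj : e j ≠ 0)
    (hpj : vcomp e (p - (j.val + 1)) = 0) :
    ∃ σ : EGSGroup p b c →* TreeAut p,
      (∀ g, σ g ∈ EGSGroup p b c) ∧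
      (∀ g, (σ g).act [(0 : Fin p)] = [(0 : Fin p)]) ∧
      (∀ g : EGSGroup p b c, (σ g).sect 0 = (g : TreeAut p)) ∧
      σ ⟨rot p, rot_mem_EGS p b c⟩ =
        ((rot p ^ ((1 : ℤ) - (j.val + 1)))⁻¹ * b *
            rot p ^ ((1 : ℤ) - (j.val + 1))) ^ ((e j)⁻¹).val ∧
      σ ⟨b, b_mem_EGS p b c⟩ = (rot p)⁻¹ * b * rot p ∧
      σ ⟨c, c_mem_EGS p b c⟩ = c := by
  classical
  have hd := hdatum
  have hvb : vec b ≠ 0 := by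
    obtain ⟨n, hn⟩ := Function.ne_iff.mp hd.1
    intro h
    apply hn
    have hx := congrFun h ((n.val : ℕ) : Fin p)
    rw [Pi.zero_apply] at hx
    have hsect := hd.2.2.2.1 n
    rw [show vec b ((n.val : ℕ) : Fin p)
        = iz ((b.sect ((n.val : ℕ) : Fin p)).perm [] 0) from rfl,
      hsect, entry_of_rot_pow] at hx
    exact hx
  have hex : ∃ t, phi t (vec b) ≠ 0 := by
    obtain ⟨t, _, h⟩ := phi_exists_ne_zero hvb
    exact ⟨t, h⟩
  set k := Nat.find hex with hkdef
  have hμ : phi k (vec b) ≠ 0 := Nat.find_spec hex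
  have hk : k < p := by
    obtain ⟨t, htp, h⟩ := phi_exists_ne_zero hvb
    exact lt_of_le_of_lt (Nat.find_min' hex h) htp
  have hlow : ∀ t < k, phi t (vec b) = 0 := by
    intro t ht
    by_contra hcon
    exact Nat.find_min hex ht hcon
  have hgood := good_of_mem hd hp3 hk hlow
  refine ⟨{ toFun := fun g => sigmaFun e b j k g.1,
            map_one' := sigmaFun_one,
            map_mul' := fun g h =>
              sigmaFun_mul hd hp3 hj hpj hk (hgood g.1 g.2) (hgood h.1 h.2) },
          ?_, ?_, ?_, ?_, ?_, ?_⟩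
  · intro g
    obtain ⟨x, hx⟩ := g
    induction hx using Subgroup.closure_induction with
    | mem y hy =>
      simp only [Set.mem_insert_iff, Set.mem_singleton_iff] at hy
      rcases hy with h | h | h
      · show sigmaFun e b j k y ∈ _
        rw [h, sigmaFun_rot hd hp3, ← conj3_eq_zpow hp3 b j]
        exact Subgroup.pow_mem _
          (mul_mem (mul_mem (inv_mem (Subgroup.zpow_mem _ (rot_mem_EGS p b c) _))
            (b_mem_EGS p b c)) (Subgroup.zpow_mem _ (rot_mem_EGS p b c) _)) _
      · show sigmaFun e b j k y ∈ _
        rw [h, sigmaFun_b hd hp3 hμ, conj3_neg_one_eq]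
        exact mul_mem (mul_mem (inv_mem (rot_mem_EGS p b c)) (b_mem_EGS p b c))
          (rot_mem_EGS p b c)
      · show sigmaFun e b j k y ∈ _
        rw [h, sigmaFun_c hd hp3 hk hlow hμ]
        exact c_mem_EGS p b c
    | one =>
      show sigmaFun e b j k 1 ∈ _
      rw [sigmaFun_one]
      exact one_mem _
    | mul x y hx hy ihx ihy =>
      show sigmaFun e b j k (x * y) ∈ _
      rw [sigmaFun_mul hd hp3 hj hpj hk (hgood x hx) (hgood y hy)]
      exact mul_mem ihx ihy
    | inv x hx ihx =>
      show sigmaFun e b j k x⁻¹ ∈ _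
      have h1 : sigmaFun e b j k x * sigmaFun e b j k x⁻¹ = 1 := by
        rw [← sigmaFun_mul hd hp3 hj hpj hk (hgood x hx) (good_inv hk (hgood x hx)),
          mul_inv_cancel, sigmaFun_one]
      rw [← inv_eq_of_mul_eq_one_right h1]
      exact inv_mem ihx
  · intro g
    show (sigmaFun e b j k g.1).act [(0 : Fin p)] = [(0 : Fin p)]
    exact act_single_zero (sigmaFun_root hd _)
  · intro g
    show (sigmaFun e b j k g.1).sect 0 = g.1
    exact sigmaFun_sect0 hd hp3 hj _
  · show sigmaFun e b j k (rot p) = _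
    rw [sigmaFun_rot hd hp3, ← conj3_eq_zpow hp3 b j]
  · show sigmaFun e b j k b = _
    rw [sigmaFun_b hd hp3 hμ, conj3_neg_one_eq]
  · show sigmaFun e b j k c = _
    exact sigmaFun_c hd hp3 hk hlow hμ
end EGSAux
end
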